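/- arXiv:1109.5426 — 4 statements merged into one kernel-verified Lean document; each statement's English description precedes it below -/
import Mathlib

section
/- Let {r_k}_{k∈ℤ} be an absolutely summable sequence of complex numbers with r_{-k} = conj(r_k) for all k, let f(ω) := Σ_{k=-∞}^{∞} r_k e^{-ιkω}, and for each n let Σ_n be the n×n Hermitian Toeplitz matrix with (i,j) entry r_{i-j}. Then every eigenvalue of Σ_n lies in the interval [min_{ω∈[0,2π]} f(ω), max_{ω∈[0,2π]} f(ω)]. -/
open Filter Matrix

set_option maxHeartbeats 1000000

open Filter Matrix

lemma exp_int_integral (m : ℤ) :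
    ∫ ω in (0:ℝ)..(2*Real.pi), Complex.exp (Complex.I * (m:ℂ) * (ω:ℝ)) =
      if m = 0 then (2*Real.pi : ℂ) else 0 := by
  rcases eq_or_ne m 0 with h | h
  · simp [h]
  · rw [if_neg h]
    have hc : Complex.I * (m:ℂ) ≠ 0 := by
      simp [Complex.I_ne_zero, Complex.ext_iff]
      exact_mod_cast h
    rw [integral_exp_mul_complex hc]
    have h1 : Complex.exp (Complex.I * (m:ℂ) * ((2*Real.pi:ℝ):ℂ)) = 1 := by
      rw [show Complex.I * (m:ℂ) * ((2*Real.pi:ℝ):ℂ) = (m:ℂ) * (2 * (Real.pi:ℂ) * Complex.I) by push_cast; ring]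
      exact Complex.exp_int_mul_two_pi_mul_I m
    rw [h1]
    simp

lemma key_integral {n : ℕ} (w : Fin n → ℂ) (k : ℤ) :
    ∫ ω in (0:ℝ)..(2*Real.pi),
        Complex.exp (-Complex.I * (k:ℂ) * (ω:ℂ)) *
          ((starRingEnd ℂ) (∑ p : Fin n, w p * Complex.exp (-Complex.I * ((p:ℤ):ℂ) * (ω:ℂ))) *
            (∑ q : Fin n, w q * Complex.exp (-Complex.I * ((q:ℤ):ℂ) * (ω:ℂ))))
      = ∑ p : Fin n, ∑ q : Fin n, (if ((p:ℤ) - (q:ℤ)) = k then ((2*Real.pi:ℝ):ℂ) else 0) *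
          ((starRingEnd ℂ) (w p) * w q) := by
  have hpt : ∀ ω : ℝ,
      Complex.exp (-Complex.I * (k:ℂ) * (ω:ℂ)) *
          ((starRingEnd ℂ) (∑ p : Fin n, w p * Complex.exp (-Complex.I * ((p:ℤ):ℂ) * (ω:ℂ))) *
            (∑ q : Fin n, w q * Complex.exp (-Complex.I * ((q:ℤ):ℂ) * (ω:ℂ))))
        = ∑ p : Fin n, ∑ q : Fin n, ((starRingEnd ℂ) (w p) * w q) *
            Complex.exp (Complex.I * ((((p:ℤ) - (q:ℤ) - k):ℤ):ℂ) * (ω:ℂ)) := by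
    intro ω
    rw [map_sum, Finset.sum_mul_sum, Finset.mul_sum]
    refine Finset.sum_congr rfl fun p _ => ?_
    rw [Finset.mul_sum]
    refine Finset.sum_congr rfl fun q _ => ?_
    rw [_root_.map_mul, ← Complex.exp_conj]
    rw [show (starRingEnd ℂ) (-Complex.I * ((p:ℤ):ℂ) * (ω:ℂ)) = Complex.I * ((p:ℤ):ℂ) * (ω:ℂ) by
      simp [_root_.map_mul, Complex.conj_I, Complex.conj_ofReal]]
    have h2 : Complex.exp (-Complex.I * (k:ℂ) * (ω:ℂ)) * (Complex.exp (Complex.I * ((p:ℤ):ℂ) * (ω:ℂ)) * Complex.exp (-Complex.I * ((q:ℤ):ℂ) * (ω:ℂ))) = Complex.exp (Complex.I * ((((p:ℤ) - (q:ℤ) - k):ℤ):ℂ) * (ω:ℂ)) := by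
      rw [← Complex.exp_add, ← Complex.exp_add]
      congr 1
      push_cast
      ring
    calc Complex.exp (-Complex.I * (k:ℂ) * (ω:ℂ)) * ((starRingEnd ℂ) (w p) * Complex.exp (Complex.I * ((p:ℤ):ℂ) * (ω:ℂ)) * (w q * Complex.exp (-Complex.I * ((q:ℤ):ℂ) * (ω:ℂ))))
        = ((starRingEnd ℂ) (w p) * w q) * (Complex.exp (-Complex.I * (k:ℂ) * (ω:ℂ)) * (Complex.exp (Complex.I * ((p:ℤ):ℂ) * (ω:ℂ)) * Complex.exp (-Complex.I * ((q:ℤ):ℂ) * (ω:ℂ)))) := by ring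
      _ = _ := by rw [h2]
  have hint1 : ∀ (a : ℂ) (m : ℤ), IntervalIntegrable
      (fun ω : ℝ => a * Complex.exp (Complex.I * (m:ℂ) * (ω:ℂ)))
      MeasureTheory.volume 0 (2*Real.pi) :=
    fun a m => (continuous_const.mul
      (Complex.continuous_exp.comp (continuous_const.mul Complex.continuous_ofReal))).intervalIntegrable _ _
  have hint2 : ∀ p : Fin n, IntervalIntegrable
      (fun ω : ℝ => ∑ q : Fin n, ((starRingEnd ℂ) (w p) * w q) *
        Complex.exp (Complex.I * ((((p:ℤ) - (q:ℤ) - k):ℤ):ℂ) * (ω:ℂ)))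
      MeasureTheory.volume 0 (2*Real.pi) :=
    fun p => (continuous_finset_sum _ (fun q _ => continuous_const.mul
      (Complex.continuous_exp.comp (continuous_const.mul Complex.continuous_ofReal)))).intervalIntegrable _ _
  simp only [hpt]
  rw [intervalIntegral.integral_finset_sum (fun p _ => hint2 p)]
  refine Finset.sum_congr rfl fun p _ => ?_
  rw [intervalIntegral.integral_finset_sum (fun q _ => hint1 _ _)]
  refine Finset.sum_congr rfl fun q _ => ?_
  rw [intervalIntegral.integral_const_mul, exp_int_integral, mul_comm]
  congr 1
  simp [sub_eq_zero]

/-- Every eigenvalue of the Hermitian Toeplitz matrix built from an absolutely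
summable autocovariance sequence lies between the minimum and the maximum of the
spectrum `f` over `[0, 2π]`. -/
theorem toeplitz_eigenvalue_range
    (r : ℤ → ℂ) (hsum : Summable fun k => ‖r k‖)
    (hconj : ∀ k : ℤ, r (-k) = starRingEnd ℂ (r k))
    (f : ℝ → ℝ)
    (hf : ∀ ω : ℝ, (f ω : ℂ) = ∑' k : ℤ, r k * Complex.exp (-Complex.I * (k : ℂ) * (ω : ℂ)))
    (T : (n : ℕ) → Matrix (Fin n) (Fin n) ℂ)
    (hT : ∀ (n : ℕ) (i j : Fin n), T n i j = r ((i : ℤ) - (j : ℤ)))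
    (hHerm : ∀ n : ℕ, (T n).IsHermitian) :
    ∀ (n : ℕ) (i : Fin n),
      (hHerm n).eigenvalues i ∈
        Set.Icc (sInf (f '' Set.Icc (0:ℝ) (2 * Real.pi)))
                (sSup (f '' Set.Icc (0:ℝ) (2 * Real.pi))) := by
  have twopi_pos : (0:ℝ) < 2 * Real.pi := by positivity
  -- continuity of f
  have hFcont : Continuous (fun ω : ℝ => ∑' k : ℤ, r k * Complex.exp (-Complex.I * (k:ℂ) * (ω:ℂ))) := by
    refine continuous_tsum (fun k => ?_) hsum (fun k ω => ?_)
    · exact continuous_const.mul (Complex.continuous_exp.comp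
        (continuous_const.mul Complex.continuous_ofReal))
    · rw [norm_mul]
      have : ‖Complex.exp (-Complex.I * (k:ℂ) * (ω:ℂ))‖ = 1 := by
        rw [Complex.norm_exp]
        simp
      rw [this, mul_one]
  have hcf : Continuous f := by
    have hfr : f = fun ω : ℝ => (∑' k : ℤ, r k * Complex.exp (-Complex.I * (k:ℂ) * (ω:ℂ))).re := by
      funext ω
      rw [← hf ω, Complex.ofReal_re]
    rw [hfr]
    exact Complex.continuous_re.comp hFcont
  intro n i
  set m := sInf (f '' Set.Icc (0:ℝ) (2 * Real.pi)) with hm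
  set M := sSup (f '' Set.Icc (0:ℝ) (2 * Real.pi)) with hM
  have hcpt : IsCompact (f '' Set.Icc (0:ℝ) (2 * Real.pi)) := isCompact_Icc.image hcf
  have hmle : ∀ ω ∈ Set.Icc (0:ℝ) (2*Real.pi), m ≤ f ω :=
    fun ω hω => csInf_le hcpt.bddBelow ⟨ω, hω, rfl⟩
  have hleM : ∀ ω ∈ Set.Icc (0:ℝ) (2*Real.pi), f ω ≤ M :=
    fun ω hω => le_csSup hcpt.bddAbove ⟨ω, hω, rfl⟩
  set w : Fin n → ℂ := ⇑((hHerm n).eigenvectorBasis i) with hwdef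
  set μ : ℝ := (hHerm n).eigenvalues i with hμdef
  have hmv : T n *ᵥ w = μ • w := (hHerm n).mulVec_eigenvectorBasis i
  have hw1r : ∑ p : Fin n, ‖w p‖^2 = 1 := by
    have hn1 : ‖(hHerm n).eigenvectorBasis i‖ = 1 := (hHerm n).eigenvectorBasis.orthonormal.1 i
    rw [EuclideanSpace.norm_eq] at hn1
    have h0 : (0:ℝ) ≤ ∑ p : Fin n, ‖w p‖^2 :=
      Finset.sum_nonneg fun p _ => sq_nonneg _
    have := Real.sqrt_eq_one.mp hn1
    exact this
  have hw1 : ∑ p : Fin n, (starRingEnd ℂ) (w p) * w p = 1 := by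
    have : ∀ p : Fin n, (starRingEnd ℂ) (w p) * w p = ((‖w p‖^2 : ℝ) : ℂ) := fun p => by
      rw [RCLike.conj_mul]; norm_cast
    rw [Finset.sum_congr rfl fun p _ => this p, ← Complex.ofReal_sum, hw1r, Complex.ofReal_one]
  have hS : (μ:ℂ) = ∑ p : Fin n, ∑ q : Fin n,
      (starRingEnd ℂ) (w p) * (r ((p:ℤ)-(q:ℤ)) * w q) := by
    calc (μ:ℂ) = (μ:ℂ) * ∑ p : Fin n, (starRingEnd ℂ) (w p) * w p := by rw [hw1, mul_one]
      _ = ∑ p : Fin n, (starRingEnd ℂ) (w p) * ((μ • w) p) := by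
          rw [Finset.mul_sum]
          refine Finset.sum_congr rfl fun p _ => ?_
          simp only [Pi.smul_apply, Complex.real_smul]
          ring
      _ = ∑ p : Fin n, (starRingEnd ℂ) (w p) * ((T n *ᵥ w) p) := by rw [hmv]
      _ = _ := by
          refine Finset.sum_congr rfl fun p _ => ?_
          simp only [Matrix.mulVec, dotProduct, hT, Finset.mul_sum]
  set c : ℝ → ℂ := fun ω => ∑ q : Fin n, w q * Complex.exp (-Complex.I * ((q:ℤ):ℂ) * (ω:ℂ)) with hcdef
  have hccont : Continuous c := continuous_finset_sum _ fun q _ =>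
    continuous_const.mul (Complex.continuous_exp.comp
      (continuous_const.mul Complex.continuous_ofReal))
  set φ : ℝ → ℝ := fun ω => ‖c ω‖^2 with hφdef
  have hφc : ∀ ω, ((φ ω : ℝ):ℂ) = (starRingEnd ℂ) (c ω) * c ω := by
    intro ω
    rw [RCLike.conj_mul]
    norm_cast
  have hφcont : Continuous φ := (hccont.norm.pow 2)
  have hφnn : ∀ ω, 0 ≤ φ ω := fun ω => sq_nonneg _
  have hdiag : ∀ p q : Fin n, (((p:ℤ) - (q:ℤ) = (0:ℤ))) ↔ q = p := by
    intro p q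
    rw [sub_eq_zero]
    constructor
    · intro h; exact (Fin.ext (by exact_mod_cast h)).symm
    · intro h; rw [h]
  -- diagonal integral
  have hI2c : (∫ ω in (0:ℝ)..(2*Real.pi), (starRingEnd ℂ) (c ω) * c ω) = ((2*Real.pi:ℝ):ℂ) := by
    have key0 := key_integral w 0
    simp only [Int.cast_zero, mul_zero, zero_mul, Complex.exp_zero, one_mul] at key0
    rw [hcdef]
    rw [key0]
    have : ∀ p : Fin n, ∑ q : Fin n,
        (if ((p:ℤ) - (q:ℤ)) = (0:ℤ) then ((2*Real.pi:ℝ):ℂ) else 0) *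
          ((starRingEnd ℂ) (w p) * w q)
        = ((2*Real.pi:ℝ):ℂ) * ((starRingEnd ℂ) (w p) * w p) := by
      intro p
      rw [Finset.sum_congr rfl (fun q _ => by
        rw [if_congr (hdiag p q) rfl rfl, ite_mul, zero_mul]),
        Finset.sum_ite_eq' Finset.univ p
          (fun q => ((2*Real.pi:ℝ):ℂ) * ((starRingEnd ℂ) (w p) * w q)),
        if_pos (Finset.mem_univ p)]
    rw [Finset.sum_congr rfl fun p _ => this p, ← Finset.mul_sum, hw1, mul_one]
  have hI2 : (∫ ω in (0:ℝ)..(2*Real.pi), φ ω) = 2*Real.pi := by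
    have h1 : ((∫ ω in (0:ℝ)..(2*Real.pi), φ ω : ℝ):ℂ) = ((2*Real.pi:ℝ):ℂ) := by
      rw [← intervalIntegral.integral_ofReal,
        intervalIntegral.integral_congr (g := fun ω => (starRingEnd ℂ) (c ω) * c ω)
          (fun ω _ => hφc ω), hI2c]
    exact_mod_cast h1
  -- main integral
  have hexp1 : ∀ (k : ℤ) (ω : ℝ), ‖Complex.exp (-Complex.I * (k:ℂ) * (ω:ℂ))‖ = 1 := by
    intro k ω
    rw [Complex.norm_exp]
    simp
  have hmainC : (∫ ω in (0:ℝ)..(2*Real.pi), (f ω : ℂ) * ((starRingEnd ℂ) (c ω) * c ω))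
      = ((2*Real.pi:ℝ):ℂ) * (μ:ℂ) := by
    set ν := MeasureTheory.volume.restrict (Set.Ioc (0:ℝ) (2*Real.pi)) with hν
    haveI : MeasureTheory.IsFiniteMeasure ν := by
      constructor
      rw [hν, MeasureTheory.Measure.restrict_apply_univ, Real.volume_Ioc]
      exact ENNReal.ofReal_lt_top
    set g : ℤ → ℝ → ℂ := fun k ω =>
      (r k * Complex.exp (-Complex.I * (k:ℂ) * (ω:ℂ))) * ((starRingEnd ℂ) (c ω) * c ω) with hg
    have hgcont : ∀ k, Continuous (g k) := fun k =>
      (continuous_const.mul (Complex.continuous_exp.comp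
        (continuous_const.mul Complex.continuous_ofReal))).mul
        ((Complex.continuous_conj.comp hccont).mul hccont)
    have hgint : ∀ k, MeasureTheory.Integrable (g k) ν := fun k => (hgcont k).integrableOn_Ioc
    set B : ℝ := (∑ q : Fin n, ‖w q‖)^2 with hB
    have hBnn : 0 ≤ B := sq_nonneg _
    have hcB : ∀ ω, ‖(starRingEnd ℂ) (c ω) * c ω‖ ≤ B := by
      intro ω
      rw [norm_mul, RCLike.norm_conj]
      have hc1 : ‖c ω‖ ≤ ∑ q : Fin n, ‖w q‖ := by
        refine (norm_sum_le _ _).trans ?_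
        refine Finset.sum_le_sum fun q _ => ?_
        rw [norm_mul, hexp1, mul_one]
      calc ‖c ω‖ * ‖c ω‖ ≤ (∑ q : Fin n, ‖w q‖) * (∑ q : Fin n, ‖w q‖) :=
            mul_le_mul hc1 hc1 (norm_nonneg _) ((norm_nonneg _).trans hc1)
        _ = B := (sq (∑ q : Fin n, ‖w q‖)).symm
    have hgbound : ∀ k ω, ‖g k ω‖ ≤ ‖r k‖ * B := by
      intro k ω
      rw [hg]
      simp only []
      rw [norm_mul, norm_mul, hexp1, mul_one]
      exact mul_le_mul_of_nonneg_left (hcB ω) (norm_nonneg _)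
    have hsummable : Summable (fun k => ∫ ω, ‖g k ω‖ ∂ν) := by
      refine Summable.of_nonneg_of_le
        (fun k => MeasureTheory.integral_nonneg fun ω => norm_nonneg _)
        (fun k => ?_) (hsum.mul_right (B * (2*Real.pi)))
      have h1 : (∫ ω, ‖g k ω‖ ∂ν) ≤ ∫ _ω, (‖r k‖ * B) ∂ν := by
        refine MeasureTheory.integral_mono_of_nonneg
          (MeasureTheory.ae_of_all _ fun ω => norm_nonneg _)
          (MeasureTheory.integrable_const _)
          (MeasureTheory.ae_of_all _ fun ω => hgbound k ω)
      rw [MeasureTheory.integral_const] at h1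
      have h2 : (ν Set.univ).toReal = 2*Real.pi := by
        rw [hν, MeasureTheory.Measure.restrict_apply_univ, Real.volume_Ioc]
        rw [ENNReal.toReal_ofReal (by linarith)]
        ring
      rw [MeasureTheory.measureReal_def, h2, smul_eq_mul] at h1
      calc (∫ ω, ‖g k ω‖ ∂ν) ≤ 2*Real.pi * (‖r k‖ * B) := h1
        _ = ‖r k‖ * (B * (2*Real.pi)) := by ring
    have hswap := MeasureTheory.integral_tsum_of_summable_integral_norm hgint hsummable
    have hpt2 : ∀ ω : ℝ, ∑' k : ℤ, g k ω = (f ω:ℂ) * ((starRingEnd ℂ) (c ω) * c ω) := by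
      intro ω
      rw [hg]
      simp only []
      rw [tsum_mul_right, ← hf]
    have hone : ∀ k : ℤ, (∫ ω, g k ω ∂ν)
        = r k * ∑ p : Fin n, ∑ q : Fin n,
            (if ((p:ℤ) - (q:ℤ)) = k then ((2*Real.pi:ℝ):ℂ) else 0) *
              ((starRingEnd ℂ) (w p) * w q) := by
      intro k
      have hconv : (∫ ω, g k ω ∂ν) = ∫ ω in (0:ℝ)..(2*Real.pi), g k ω :=
        (intervalIntegral.integral_of_le (le_of_lt twopi_pos)).symm
      rw [hconv]
      have heq : ∀ ω : ℝ, g k ω = r k * (Complex.exp (-Complex.I * (k:ℂ) * (ω:ℂ)) *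
          ((starRingEnd ℂ) (c ω) * c ω)) := fun ω => by rw [hg]; simp only []; ring
      rw [intervalIntegral.integral_congr (g := fun ω => r k *
        (Complex.exp (-Complex.I * (k:ℂ) * (ω:ℂ)) * ((starRingEnd ℂ) (c ω) * c ω)))
        (fun ω _ => heq ω)]
      rw [intervalIntegral.integral_const_mul, hcdef, key_integral w k]
    -- summability of pointwise terms
    have hterm_summable : ∀ (p q : Fin n), Summable (fun k : ℤ => r k *
        ((if ((p:ℤ) - (q:ℤ)) = k then ((2*Real.pi:ℝ):ℂ) else 0) *
          ((starRingEnd ℂ) (w p) * w q))) := by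
      intro p q
      refine summable_of_ne_finset_zero (s := {(p:ℤ) - (q:ℤ)}) fun k hk => ?_
      rw [if_neg (fun h => hk (Finset.mem_singleton.mpr h.symm)), zero_mul, mul_zero]
    have htsum : ∑' k : ℤ, (∫ ω, g k ω ∂ν) = ((2*Real.pi:ℝ):ℂ) * (μ:ℂ) := by
      rw [tsum_congr hone]
      have hsplit : ∀ k : ℤ, r k * ∑ p : Fin n, ∑ q : Fin n,
          (if ((p:ℤ) - (q:ℤ)) = k then ((2*Real.pi:ℝ):ℂ) else 0) *
            ((starRingEnd ℂ) (w p) * w q)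
          = ∑ p : Fin n, ∑ q : Fin n, r k *
            ((if ((p:ℤ) - (q:ℤ)) = k then ((2*Real.pi:ℝ):ℂ) else 0) *
              ((starRingEnd ℂ) (w p) * w q)) := by
        intro k
        rw [Finset.mul_sum]
        exact Finset.sum_congr rfl fun p _ => by rw [Finset.mul_sum]
      rw [tsum_congr hsplit]
      rw [Summable.tsum_finsetSum (fun p _ => summable_sum (fun q _ => hterm_summable p q))]
      have hinner : ∀ p : Fin n, (∑' k : ℤ, ∑ q : Fin n, r k *
          ((if ((p:ℤ) - (q:ℤ)) = k then ((2*Real.pi:ℝ):ℂ) else 0) *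
            ((starRingEnd ℂ) (w p) * w q)))
          = ∑ q : Fin n, r ((p:ℤ)-(q:ℤ)) *
              (((2*Real.pi:ℝ):ℂ) * ((starRingEnd ℂ) (w p) * w q)) := by
        intro p
        rw [Summable.tsum_finsetSum (fun q _ => hterm_summable p q)]
        refine Finset.sum_congr rfl fun q _ => ?_
        rw [tsum_eq_single ((p:ℤ)-(q:ℤ))
          (fun k hk => by rw [if_neg (fun h => hk h.symm), zero_mul, mul_zero]),
          if_pos rfl]
      rw [Finset.sum_congr rfl fun p _ => hinner p, hS, Finset.mul_sum]
      refine Finset.sum_congr rfl fun p _ => ?_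
      rw [Finset.mul_sum]
      refine Finset.sum_congr rfl fun q _ => ?_
      ring
    calc (∫ ω in (0:ℝ)..(2*Real.pi), (f ω : ℂ) * ((starRingEnd ℂ) (c ω) * c ω))
        = ∫ ω, (f ω : ℂ) * ((starRingEnd ℂ) (c ω) * c ω) ∂ν :=
          intervalIntegral.integral_of_le (le_of_lt twopi_pos)
      _ = ∫ ω, (∑' k : ℤ, g k ω) ∂ν :=
          MeasureTheory.integral_congr_ae (MeasureTheory.ae_of_all _ fun ω => (hpt2 ω).symm)
      _ = ∑' k : ℤ, ∫ ω, g k ω ∂ν := hswap.symm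
      _ = ((2*Real.pi:ℝ):ℂ) * (μ:ℂ) := htsum
  have hmain : (∫ ω in (0:ℝ)..(2*Real.pi), f ω * φ ω) = (2*Real.pi) * μ := by
    have h1 : ((∫ ω in (0:ℝ)..(2*Real.pi), f ω * φ ω : ℝ):ℂ)
        = ((2*Real.pi:ℝ):ℂ) * (μ:ℂ) := by
      rw [← intervalIntegral.integral_ofReal]
      rw [intervalIntegral.integral_congr
        (g := fun ω => (f ω : ℂ) * ((starRingEnd ℂ) (c ω) * c ω))
        (fun ω _ => by rw [Complex.ofReal_mul, hφc ω])]
      exact hmainC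
    exact_mod_cast h1
  -- conclude
  constructor
  · have h1 : (∫ ω in (0:ℝ)..(2*Real.pi), m * φ ω) ≤ ∫ ω in (0:ℝ)..(2*Real.pi), f ω * φ ω := by
      refine intervalIntegral.integral_mono_on (le_of_lt twopi_pos) ?_ ?_ ?_
      · exact ((continuous_const.mul hφcont).intervalIntegrable _ _)
      · exact ((hcf.mul hφcont).intervalIntegrable _ _)
      · intro x hx
        exact mul_le_mul_of_nonneg_right (hmle x hx) (hφnn x)
    rw [intervalIntegral.integral_const_mul, hI2, hmain] at h1
    nlinarith [Real.pi_pos]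
  · have h1 : (∫ ω in (0:ℝ)..(2*Real.pi), f ω * φ ω) ≤ ∫ ω in (0:ℝ)..(2*Real.pi), M * φ ω := by
      refine intervalIntegral.integral_mono_on (le_of_lt twopi_pos) ?_ ?_ ?_
      · exact ((hcf.mul hφcont).intervalIntegrable _ _)
      · exact ((continuous_const.mul hφcont).intervalIntegrable _ _)
      · intro x hx
        exact mul_le_mul_of_nonneg_right (hleM x hx) (hφnn x)
    rw [intervalIntegral.integral_const_mul, hI2, hmain] at h1
    nlinarith [Real.pi_pos]
end

section
/- Let {r_k}_{k∈ℤ} be an absolutely summable sequence of complex numbers with r_{-k} = conj(r_k), let f(ω) := Σ_{k=-∞}^{∞} r_k e^{-ιkω}, and for each n let Σ_n be the n×n Hermitian Toeplitz matrix with (i,j) entry r_{i-j}, with eigenvalues ζ_1^{(n)},…,ζ_n^{(n)}, and let ξ_i^{(n)} := f(2π(i-1)/n) for i = 1,…,n be the n uniform samples of f. Then for every continuous function g : ℝ → ℝ, lim_{n→∞} (1/n) | Σ_{i=1}^n g(ζ_i^{(n)}) − Σ_{i=1}^n g(ξ_i^{(n)}) | = 0. -/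
open Filter Matrix

noncomputable section ToepAux
namespace ToepAux

/-- unit complex exponential of a real angle -/
def eC (θ : ℝ) : ℂ := Complex.exp (θ * Complex.I)

lemma eC_mul (a b : ℝ) : eC a * eC b = eC (a + b) := by
  rw [eC, eC, eC, ← Complex.exp_add]; push_cast; ring_nf

lemma norm_eC (θ : ℝ) : ‖eC θ‖ = 1 := by
  rw [eC, Complex.norm_exp_ofReal_mul_I]

lemma eC_pow (θ : ℝ) (t : ℕ) : eC θ ^ t = eC (t * θ) := by
  rw [eC, eC, ← Complex.exp_nat_mul]; push_cast; ring_nf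

lemma eC_int_two_pi (b : ℤ) : eC (b * (2 * Real.pi)) = 1 := by
  rw [eC]
  have : ((b * (2 * Real.pi) : ℝ) : ℂ) * Complex.I = (b : ℂ) * (2 * Real.pi * Complex.I) := by
    push_cast; ring
  rw [this, Complex.exp_int_mul_two_pi_mul_I]

/-- Orthogonality of characters: geometric sum of roots of unity. -/
lemma gsum (n : ℕ) (hn : 0 < n) (a : ℤ) :
    ∑ t : Fin n, eC (2 * Real.pi * a * t / n) = if (n : ℤ) ∣ a then (n : ℂ) else 0 := by
  have hn' : (n : ℝ) ≠ 0 := Nat.cast_ne_zero.mpr hn.ne'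
  have key : ∀ t : Fin n, eC (2 * Real.pi * a * t / n) = eC (2 * Real.pi * a / n) ^ (t : ℕ) := by
    intro t; rw [eC_pow]; congr 1; field_simp
  simp_rw [key]
  rw [Fin.sum_univ_eq_sum_range (fun t => eC (2 * Real.pi * a / n) ^ t) n]
  by_cases hd : (n : ℤ) ∣ a
  · obtain ⟨b, hb⟩ := hd
    have h1 : eC (2 * Real.pi * a / n) = 1 := by
      have harg : (2 * Real.pi * a / n : ℝ) = (b : ℤ) * (2 * Real.pi) := by
        rw [hb]; push_cast; field_simp
      rw [harg, eC_int_two_pi]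
    rw [if_pos ⟨b, hb⟩]
    simp [h1]
  · have hz : eC (2 * Real.pi * a / n) ≠ 1 := by
      intro h
      rw [eC, Complex.exp_eq_one_iff] at h
      obtain ⟨k, hk⟩ := h
      have hI : (Complex.I : ℂ) ≠ 0 := Complex.I_ne_zero
      have h2 : ((2 * Real.pi * a / n : ℝ) : ℂ) = k * (2 * Real.pi) := by
        apply mul_right_cancel₀ hI
        rw [hk]; ring
      have hnc : (n : ℂ) ≠ 0 := by exact_mod_cast hn'
      have hpic : (2 : ℂ) * Real.pi ≠ 0 := by
        have : (Real.pi : ℂ) ≠ 0 := by exact_mod_cast Real.pi_ne_zero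
        simp [this]
      push_cast at h2
      have h2n : 2 * (Real.pi : ℂ) * a = k * (2 * Real.pi) * n := by
        have h3 := congrArg (fun z : ℂ => z * (n : ℂ)) h2
        rwa [div_mul_cancel₀ _ hnc] at h3
      have h4 : (a : ℂ) = k * n := by
        apply mul_left_cancel₀ hpic
        linear_combination h2n
      have h5 : a = k * n := by exact_mod_cast h4
      exact hd ⟨k, by linarith [h5]⟩
    rw [geom_sum_eq hz, if_neg hd]
    have hzn : eC (2 * Real.pi * a / n) ^ n = 1 := by
      rw [eC_pow]
      have : ((n : ℝ)) * (2 * Real.pi * a / n) = (a : ℤ) * (2 * Real.pi) := by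
        field_simp
      rw [this, eC_int_two_pi]
    rw [hzn]; simp

/-- DFT-type matrices -/
def Fm (n : ℕ) : Matrix (Fin n) (Fin n) ℂ :=
  Matrix.of fun i j => eC (2 * Real.pi * (i : ℕ) * (j : ℕ) / n)

def Gm (n : ℕ) : Matrix (Fin n) (Fin n) ℂ :=
  Matrix.of fun i j => (n : ℂ)⁻¹ * eC (-(2 * Real.pi * (i : ℕ) * (j : ℕ) / n))

lemma Gm_mul_Fm (n : ℕ) (hn : 0 < n) : Gm n * Fm n = 1 := by
  ext a b
  rw [Matrix.mul_apply]
  have key : ∀ t : Fin n, Gm n a t * Fm n t b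
      = (n : ℂ)⁻¹ * eC (2 * Real.pi * (((b : ℤ) - (a : ℤ) : ℤ) : ℝ) * t / n) := by
    intro t
    simp only [Gm, Fm, Matrix.of_apply]
    rw [mul_assoc, eC_mul]
    congr 2
    push_cast
    by_cases h : (n : ℝ) = 0
    · simp [h]
    · field_simp; ring
  rw [Finset.sum_congr rfl fun t _ => key t, ← Finset.mul_sum, gsum n hn ((b : ℤ) - (a : ℤ))]
  by_cases hab : a = b
  · subst hab
    simp [Matrix.one_apply, Nat.cast_ne_zero.mpr hn.ne']
  · have hnd : ¬ (n : ℤ) ∣ ((b : ℤ) - (a : ℤ)) := by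
      intro hdvd
      have hb := b.isLt; have ha := a.isLt
      have h0 : ((b : ℤ) - (a : ℤ)) = 0 := by
        refine Int.eq_zero_of_abs_lt_dvd hdvd ?_
        rw [abs_sub_lt_iff]
        constructor <;> omega
      have : a = b := by
        have : (a : ℤ) = (b : ℤ) := by omega
        exact Fin.ext (by exact_mod_cast this)
      exact absurd this hab
    rw [if_neg hnd, Matrix.one_apply_ne hab]
    simp

lemma conj_pow {n : ℕ} (F G D : Matrix (Fin n) (Fin n) ℂ) (h : G * F = 1) :
    ∀ m : ℕ, 1 ≤ m → (F * D * G) ^ m = F * D ^ m * G := by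
  intro m hm
  induction m with
  | zero => omega
  | succ k ih =>
    rcases Nat.eq_or_lt_of_le hm with h1 | h1
    · have hk0 : k = 0 := by omega
      subst hk0
      simp
    · have hk : 1 ≤ k := by omega
      rw [pow_succ, ih hk, pow_succ]
      calc F * D ^ k * G * (F * D * G) = F * D ^ k * ((G * F) * (D * G)) := by
            noncomm_ring
        _ = F * (D ^ k * D) * G := by rw [h]; noncomm_ring

/-- The circulant-type comparison matrix: DFT-conjugated diagonal of spectrum samples. -/
def Cmat (f : ℝ → ℝ) (n : ℕ) : Matrix (Fin n) (Fin n) ℂ :=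
  Fm n * Matrix.diagonal (fun t : Fin n => ((f (2 * Real.pi * (t : ℝ) / n) : ℝ) : ℂ)) * Gm n

lemma trace_Cmat_pow (f : ℝ → ℝ) (n : ℕ) (hn : 0 < n) (m : ℕ) (hm : 1 ≤ m) :
    Matrix.trace ((Cmat f n) ^ m)
      = ∑ t : Fin n, ((f (2 * Real.pi * (t : ℝ) / n) : ℂ)) ^ m := by
  rw [Cmat, conj_pow _ _ _ (Gm_mul_Fm n hn) m hm, Matrix.trace_mul_cycle,
    Gm_mul_Fm n hn, one_mul, Matrix.diagonal_pow, Matrix.trace_diagonal]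
  simp

lemma summable_mul_eC (r : ℤ → ℂ) (hsum : Summable fun k => ‖r k‖) (c : ℂ) (θ : ℤ → ℝ) :
    Summable (fun k : ℤ => c * r k * eC (θ k)) := by
  apply Summable.of_norm
  have h : ∀ k, ‖c * r k * eC (θ k)‖ = ‖c‖ * ‖r k‖ := by
    intro k; rw [norm_mul, norm_mul, norm_eC, mul_one]
  simp_rw [h]
  exact hsum.mul_left _

lemma expI_eq_eC (k : ℤ) (ω : ℝ) :
    Complex.exp (-Complex.I * (k : ℂ) * (ω : ℂ)) = eC (-((k : ℝ) * ω)) := by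
  rw [eC]; congr 1; push_cast; ring

lemma Cmat_entry (r : ℤ → ℂ) (hsum : Summable fun k => ‖r k‖) (f : ℝ → ℝ)
    (hf : ∀ ω : ℝ, (f ω : ℂ) = ∑' k : ℤ, r k * Complex.exp (-Complex.I * (k : ℂ) * (ω : ℂ)))
    (n : ℕ) (hn : 0 < n) (i j : Fin n) :
    Cmat f n i j = ∑' s : ℤ, r ((i : ℤ) - (j : ℤ) - (n : ℤ) * s) := by
  have hn' : (n : ℝ) ≠ 0 := Nat.cast_ne_zero.mpr hn.ne'
  set d : ℤ := (i : ℤ) - (j : ℤ) with hd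
  have step1 : Cmat f n i j = ∑ t : Fin n,
      ((f (2 * Real.pi * (t : ℝ) / n) : ℂ)
        * ((n : ℂ)⁻¹ * eC (2 * Real.pi * (d : ℝ) * (t : ℝ) / n))) := by
    rw [Cmat, Matrix.mul_apply]
    refine Finset.sum_congr rfl fun t _ => ?_
    rw [Matrix.mul_diagonal]
    simp only [Fm, Gm, Matrix.of_apply]
    have harg : (2 * Real.pi * ((i : ℕ) : ℝ) * ((t : ℕ) : ℝ) / n)
        + (-(2 * Real.pi * ((t : ℕ) : ℝ) * ((j : ℕ) : ℝ) / n))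
        = 2 * Real.pi * (d : ℝ) * ((t : ℕ) : ℝ) / n := by
      rw [hd]; push_cast; field_simp; ring
    calc eC (2 * Real.pi * ((i : ℕ) : ℝ) * ((t : ℕ) : ℝ) / n)
          * ((f (2 * Real.pi * (t : ℝ) / n) : ℂ))
          * ((n : ℂ)⁻¹ * eC (-(2 * Real.pi * ((t : ℕ) : ℝ) * ((j : ℕ) : ℝ) / n)))
        = ((f (2 * Real.pi * (t : ℝ) / n) : ℂ))
          * ((n : ℂ)⁻¹ * (eC (2 * Real.pi * ((i : ℕ) : ℝ) * ((t : ℕ) : ℝ) / n)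
              * eC (-(2 * Real.pi * ((t : ℕ) : ℝ) * ((j : ℕ) : ℝ) / n)))) := by ring
      _ = ((f (2 * Real.pi * (t : ℝ) / n) : ℂ))
          * ((n : ℂ)⁻¹ * eC (2 * Real.pi * (d : ℝ) * ((t : ℕ) : ℝ) / n)) := by
          rw [eC_mul, harg]
  have step2 : ∀ t : Fin n,
      ((f (2 * Real.pi * (t : ℝ) / n) : ℂ)
        * ((n : ℂ)⁻¹ * eC (2 * Real.pi * (d : ℝ) * (t : ℝ) / n)))
      = ∑' k : ℤ, (n : ℂ)⁻¹ * r k * eC (2 * Real.pi * (((d - k : ℤ)) : ℝ) * (t : ℝ) / n) := by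
    intro t
    rw [hf (2 * Real.pi * (t : ℝ) / n), ← tsum_mul_right]
    refine tsum_congr fun k => ?_
    rw [expI_eq_eC]
    have harg : (2 * Real.pi * (d : ℝ) * ((t : ℕ) : ℝ) / n)
        + (-((k : ℝ) * (2 * Real.pi * ((t : ℕ) : ℝ) / n)))
        = 2 * Real.pi * (((d - k : ℤ)) : ℝ) * ((t : ℕ) : ℝ) / n := by
      push_cast; field_simp; ring
    calc r k * eC (-((k : ℝ) * (2 * Real.pi * ((t : ℕ) : ℝ) / n)))
          * ((n : ℂ)⁻¹ * eC (2 * Real.pi * (d : ℝ) * ((t : ℕ) : ℝ) / n))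
        = (n : ℂ)⁻¹ * r k * (eC (2 * Real.pi * (d : ℝ) * ((t : ℕ) : ℝ) / n)
            * eC (-((k : ℝ) * (2 * Real.pi * ((t : ℕ) : ℝ) / n)))) := by ring
      _ = (n : ℂ)⁻¹ * r k
            * eC (2 * Real.pi * (((d - k : ℤ)) : ℝ) * ((t : ℕ) : ℝ) / n) := by
          rw [eC_mul, harg]
  rw [step1, Finset.sum_congr rfl fun t _ => step2 t]
  rw [← Summable.tsum_finsetSum (fun t _ => summable_mul_eC r hsum _ _)]
  have step4 : ∀ k : ℤ,
      (∑ t : Fin n, (n : ℂ)⁻¹ * r k * eC (2 * Real.pi * (((d - k : ℤ)) : ℝ) * (t : ℝ) / n))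
      = if (n : ℤ) ∣ (d - k) then r k else 0 := by
    intro k
    rw [← Finset.mul_sum, gsum n hn (d - k)]
    by_cases hdvd : (n : ℤ) ∣ (d - k)
    · rw [if_pos hdvd, if_pos hdvd]
      have hnc : (n : ℂ) ≠ 0 := by exact_mod_cast hn.ne'
      field_simp
    · rw [if_neg hdvd, if_neg hdvd, mul_zero]
  rw [tsum_congr step4]
  have hg : Function.Injective (fun s : ℤ => d - (n : ℤ) * s) := by
    intro s1 s2 h
    simp only [sub_right_inj] at h
    have : (n : ℤ) ≠ 0 := by exact_mod_cast hn.ne'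
    exact mul_left_cancel₀ this h
  have hsupp : Function.support (fun k : ℤ => if (n : ℤ) ∣ (d - k) then r k else 0)
      ⊆ Set.range (fun s : ℤ => d - (n : ℤ) * s) := by
    intro k hk
    simp only [Function.mem_support] at hk
    by_cases hdvd : (n : ℤ) ∣ (d - k)
    · obtain ⟨c, hc⟩ := hdvd
      exact ⟨c, show d - (n : ℤ) * c = k by omega⟩
    · exact absurd (if_neg hdvd) hk
  rw [← hg.tsum_eq hsupp]
  refine tsum_congr fun s => ?_
  show (if (n : ℤ) ∣ (d - (d - (n : ℤ) * s)) then r (d - (n : ℤ) * s) else 0)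
      = r (d - (n : ℤ) * s)
  rw [if_pos ⟨s, by ring⟩]

lemma trace_hermitian_pow {n : ℕ} (A : Matrix (Fin n) (Fin n) ℂ) (hA : A.IsHermitian)
    (m : ℕ) (hm : 1 ≤ m) :
    Matrix.trace (A ^ m) = ∑ i : Fin n, ((hA.eigenvalues i : ℝ) : ℂ) ^ m := by
  have hU : (star (hA.eigenvectorUnitary : Matrix (Fin n) (Fin n) ℂ))
      * (hA.eigenvectorUnitary : Matrix (Fin n) (Fin n) ℂ) = 1 := by
    exact Matrix.mem_unitaryGroup_iff'.mp hA.eigenvectorUnitary.2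
  conv_lhs => rw [hA.spectral_theorem, Unitary.conjStarAlgAut_apply]
  rw [conj_pow _ _ _ hU m hm, Matrix.trace_mul_cycle, hU, one_mul,
    Matrix.diagonal_pow, Matrix.trace_diagonal]
  simp [RCLike.ofReal]

/-- entrywise ℓ¹ "norm" of a matrix -/
def L1 {n : ℕ} (X : Matrix (Fin n) (Fin n) ℂ) : ℝ := ∑ i, ∑ j, ‖X i j‖

lemma L1_nonneg {n : ℕ} (X : Matrix (Fin n) (Fin n) ℂ) : 0 ≤ L1 X :=
  Finset.sum_nonneg fun _ _ => Finset.sum_nonneg fun _ _ => norm_nonneg _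

lemma norm_trace_le_L1 {n : ℕ} (X : Matrix (Fin n) (Fin n) ℂ) :
    ‖Matrix.trace X‖ ≤ L1 X := by
  refine (norm_sum_le _ _).trans (Finset.sum_le_sum fun i _ => ?_)
  exact Finset.single_le_sum (fun j _ => norm_nonneg (X i j)) (Finset.mem_univ i)

lemma L1_add_le {n : ℕ} (X Y : Matrix (Fin n) (Fin n) ℂ) : L1 (X + Y) ≤ L1 X + L1 Y := by
  simp only [L1, ← Finset.sum_add_distrib, Matrix.add_apply]
  exact Finset.sum_le_sum fun i _ => Finset.sum_le_sum fun j _ => norm_add_le _ _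

lemma L1_mul_expand {n : ℕ} (X Y : Matrix (Fin n) (Fin n) ℂ) :
    L1 (X * Y) ≤ ∑ k, (∑ i, ‖X i k‖) * (∑ j, ‖Y k j‖) := by
  have h1 : L1 (X * Y) ≤ ∑ i, ∑ j, ∑ k, ‖X i k‖ * ‖Y k j‖ := by
    refine Finset.sum_le_sum fun i _ => Finset.sum_le_sum fun j _ => ?_
    rw [Matrix.mul_apply]
    refine (norm_sum_le _ _).trans (Finset.sum_le_sum fun k _ => ?_)
    rw [norm_mul]
  refine h1.trans_eq ?_
  have h2 : ∀ i, ∑ j, ∑ k, ‖X i k‖ * ‖Y k j‖ = ∑ k, ‖X i k‖ * (∑ j, ‖Y k j‖) := by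
    intro i
    rw [Finset.sum_comm]
    exact Finset.sum_congr rfl fun k _ => (Finset.mul_sum _ _ _).symm
  rw [Finset.sum_congr rfl fun i _ => h2 i, Finset.sum_comm]
  exact Finset.sum_congr rfl fun k _ => (Finset.sum_mul _ _ _).symm

lemma L1_mul_left_le {n : ℕ} (X Y : Matrix (Fin n) (Fin n) ℂ) {c : ℝ}
    (hX : ∀ k, ∑ i, ‖X i k‖ ≤ c) : L1 (X * Y) ≤ c * L1 Y := by
  refine (L1_mul_expand X Y).trans ?_
  rw [L1, Finset.mul_sum]
  exact Finset.sum_le_sum fun k _ =>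
    mul_le_mul_of_nonneg_right (hX k) (Finset.sum_nonneg fun _ _ => norm_nonneg _)

lemma L1_mul_right_le {n : ℕ} (X Y : Matrix (Fin n) (Fin n) ℂ) {c : ℝ} (hc : 0 ≤ c)
    (hY : ∀ k, ∑ j, ‖Y k j‖ ≤ c) : L1 (X * Y) ≤ L1 X * c := by
  refine (L1_mul_expand X Y).trans ?_
  rw [L1, Finset.sum_comm (γ := Fin n), Finset.sum_mul]
  exact Finset.sum_le_sum fun k _ =>
    mul_le_mul_of_nonneg_left (hY k) (Finset.sum_nonneg fun _ _ => norm_nonneg _)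

lemma colsum_mul_le {n : ℕ} (X Y : Matrix (Fin n) (Fin n) ℂ) {c d : ℝ} (hc : 0 ≤ c)
    (hX : ∀ k, ∑ i, ‖X i k‖ ≤ c) (hY : ∀ j, ∑ k, ‖Y k j‖ ≤ d) (j : Fin n) :
    ∑ i, ‖(X * Y) i j‖ ≤ c * d := by
  have h1 : ∑ i, ‖(X * Y) i j‖ ≤ ∑ i, ∑ k, ‖X i k‖ * ‖Y k j‖ := by
    refine Finset.sum_le_sum fun i _ => ?_
    rw [Matrix.mul_apply]
    refine (norm_sum_le _ _).trans (Finset.sum_le_sum fun k _ => ?_)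
    rw [norm_mul]
  rw [Finset.sum_comm] at h1
  refine h1.trans ?_
  have h2 : ∀ k, ∑ i, ‖X i k‖ * ‖Y k j‖ ≤ c * ‖Y k j‖ := by
    intro k
    rw [← Finset.sum_mul]
    exact mul_le_mul_of_nonneg_right (hX k) (norm_nonneg _)
  refine (Finset.sum_le_sum fun k _ => h2 k).trans ?_
  rw [← Finset.mul_sum]
  exact mul_le_mul_of_nonneg_left (hY j) hc

lemma rowsum_mul_le {n : ℕ} (X Y : Matrix (Fin n) (Fin n) ℂ) {c d : ℝ} (hd : 0 ≤ d)
    (hX : ∀ i, ∑ k, ‖X i k‖ ≤ c) (hY : ∀ k, ∑ j, ‖Y k j‖ ≤ d) (i : Fin n) :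
    ∑ j, ‖(X * Y) i j‖ ≤ c * d := by
  have h1 : ∑ j, ‖(X * Y) i j‖ ≤ ∑ j, ∑ k, ‖X i k‖ * ‖Y k j‖ := by
    refine Finset.sum_le_sum fun j _ => ?_
    rw [Matrix.mul_apply]
    refine (norm_sum_le _ _).trans (Finset.sum_le_sum fun k _ => ?_)
    rw [norm_mul]
  rw [Finset.sum_comm] at h1
  refine h1.trans ?_
  have h2 : ∀ k, ∑ j, ‖X i k‖ * ‖Y k j‖ ≤ ‖X i k‖ * d := by
    intro k
    rw [← Finset.mul_sum]
    exact mul_le_mul_of_nonneg_left (hY k) (norm_nonneg _)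
  refine (Finset.sum_le_sum fun k _ => h2 k).trans ?_
  rw [← Finset.sum_mul]
  exact mul_le_mul_of_nonneg_right (hX i) hd

lemma colsum_pow_le {n : ℕ} (A : Matrix (Fin n) (Fin n) ℂ) {M : ℝ} (hM : 0 ≤ M)
    (hA : ∀ k, ∑ i, ‖A i k‖ ≤ M) : ∀ m, 1 ≤ m → ∀ k, ∑ i, ‖(A ^ m) i k‖ ≤ M ^ m := by
  intro m hm
  induction m with
  | zero => omega
  | succ p ih =>
    rcases Nat.eq_or_lt_of_le hm with h1 | h1
    · have hp0 : p = 0 := by omega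
      subst hp0
      intro k; simpa using hA k
    · have hp : 1 ≤ p := by omega
      intro k
      rw [pow_succ, pow_succ]
      exact colsum_mul_le _ _ (pow_nonneg hM p) (ih hp) hA k

lemma rowsum_pow_le {n : ℕ} (A : Matrix (Fin n) (Fin n) ℂ) {M : ℝ} (hM : 0 ≤ M)
    (hA : ∀ i, ∑ j, ‖A i j‖ ≤ M) : ∀ m, 1 ≤ m → ∀ i, ∑ j, ‖(A ^ m) i j‖ ≤ M ^ m := by
  intro m hm
  induction m with
  | zero => omega
  | succ p ih =>
    rcases Nat.eq_or_lt_of_le hm with h1 | h1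
    · have hp0 : p = 0 := by omega
      subst hp0
      intro i; simpa using hA i
    · have hp : 1 ≤ p := by omega
      intro i
      rw [pow_succ, pow_succ]
      exact rowsum_mul_le _ _ hM (ih hp) hA i

lemma L1_pow_sub_le {n : ℕ} (A B : Matrix (Fin n) (Fin n) ℂ) {M : ℝ} (hM : 0 ≤ M)
    (hAc : ∀ k, ∑ i, ‖A i k‖ ≤ M) (hBr : ∀ k, ∑ j, ‖B k j‖ ≤ M) :
    ∀ m : ℕ, 1 ≤ m → L1 (A ^ m - B ^ m) ≤ (m : ℝ) * M ^ (m - 1) * L1 (A - B) := by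
  intro m hm
  induction m with
  | zero => omega
  | succ p ih =>
    rcases Nat.eq_or_lt_of_le hm with h1 | h1
    · have hp0 : p = 0 := by omega
      subst hp0
      simp
    · have hp : 1 ≤ p := by omega
      have hdecomp : A ^ (p + 1) - B ^ (p + 1)
          = A ^ p * (A - B) + (A ^ p - B ^ p) * B := by
        rw [pow_succ, pow_succ]; noncomm_ring
      rw [hdecomp]
      refine (L1_add_le _ _).trans ?_
      have h2 : L1 (A ^ p * (A - B)) ≤ M ^ p * L1 (A - B) :=
        L1_mul_left_le _ _ (colsum_pow_le A hM hAc p hp)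
      have h3 : L1 ((A ^ p - B ^ p) * B) ≤ (p * M ^ (p - 1) * L1 (A - B)) * M := by
        refine le_trans (L1_mul_right_le _ _ hM hBr) ?_
        exact mul_le_mul_of_nonneg_right (ih hp) hM
      refine (add_le_add h2 h3).trans ?_
      have hpm : p - 1 + 1 = p := by omega
      have : (p : ℝ) * M ^ (p - 1) * L1 (A - B) * M = (p : ℝ) * M ^ p * L1 (A - B) := by
        rw [mul_comm _ M, ← mul_assoc, ← mul_assoc]
        rw [mul_comm (M : ℝ) (p : ℝ), mul_assoc (p : ℝ) M (M ^ (p-1)), ← pow_succ']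
        rw [Nat.sub_add_cancel hp]
      rw [this]
      have hcast : ((p + 1 : ℕ) : ℝ) = (p : ℝ) + 1 := by push_cast; ring
      rw [Nat.add_sub_cancel, hcast]
      nlinarith [L1_nonneg (A - B), pow_nonneg hM p]

/-- two-sided tail sums of `‖r‖` -/
def V (r : ℤ → ℂ) (s : ℕ) : ℝ := ∑' k : ℤ, if (s : ℤ) ≤ |k| then ‖r k‖ else 0

lemma V_summand_summable (r : ℤ → ℂ) (hsum : Summable fun k => ‖r k‖) (s : ℕ) :
    Summable (fun k : ℤ => if (s : ℤ) ≤ |k| then ‖r k‖ else 0) := by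
  refine Summable.of_nonneg_of_le (fun k => ?_) (fun k => ?_) hsum
  · split <;> simp [norm_nonneg]
  · split <;> simp [norm_nonneg]

lemma V_nonneg (r : ℤ → ℂ) (s : ℕ) : 0 ≤ V r s := by
  refine tsum_nonneg fun k => ?_
  split <;> simp [norm_nonneg]

lemma V_tendsto (r : ℤ → ℂ) (hsum : Summable fun k => ‖r k‖) :
    Tendsto (V r) atTop (nhds 0) := by
  have key : ∀ s : ℕ, V r s
      = (∑' k : ℤ, ‖r k‖) - ∑ k ∈ Finset.Icc (-(s : ℤ) + 1) ((s : ℤ) - 1), ‖r k‖ := by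
    intro s
    have h2 := Summable.sum_add_tsum_compl (s := Finset.Icc (-(s : ℤ) + 1) ((s : ℤ) - 1))
      (f := fun k => ‖r k‖) hsum
    have h1 : V r s
        = ∑' (x : ↑((↑(Finset.Icc (-(s : ℤ) + 1) ((s : ℤ) - 1)) : Set ℤ)ᶜ)), ‖r (x : ℤ)‖ := by
      rw [V]
      refine Eq.trans (tsum_congr fun k => ?_)
        (tsum_subtype ((↑(Finset.Icc (-(s : ℤ) + 1) ((s : ℤ) - 1)) : Set ℤ)ᶜ)
          (fun k => ‖r k‖)).symm
      rw [Set.indicator_apply]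
      have hiff : k ∈ (↑(Finset.Icc (-(s : ℤ) + 1) ((s : ℤ) - 1)) : Set ℤ)ᶜ
          ↔ (s : ℤ) ≤ |k| := by
        simp only [Set.mem_compl_iff, Finset.coe_Icc, Set.mem_Icc, not_and_or, not_le]
        rcases le_or_gt 0 k with h | h
        · rw [abs_of_nonneg h]; omega
        · rw [abs_of_neg h]; omega
      split_ifs with hc1 hc2 hc2
      · rfl
      · exact absurd (hiff.mpr hc1) hc2
      · exact absurd (hiff.mp hc2) hc1
      · rfl
    rw [h1]
    linarith [h2]
  have hmono : Monotone (fun s : ℕ => Finset.Icc (-(s : ℤ) + 1) ((s : ℤ) - 1)) := by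
    intro a b hab
    exact Finset.Icc_subset_Icc (by push_cast; omega) (by push_cast; omega)
  have hcov : ∀ x : ℤ, ∃ s : ℕ, x ∈ Finset.Icc (-(s : ℤ) + 1) ((s : ℤ) - 1) := by
    intro x
    exact ⟨x.natAbs + 1, by rw [Finset.mem_Icc]; omega⟩
  have hpart : Tendsto (fun s : ℕ => ∑ k ∈ Finset.Icc (-(s : ℤ) + 1) ((s : ℤ) - 1), ‖r k‖)
      atTop (nhds (∑' k : ℤ, ‖r k‖)) :=
    hsum.hasSum.comp (tendsto_atTop_finset_of_monotone hmono hcov)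
  have := (tendsto_const_nhds (x := ∑' k : ℤ, ‖r k‖) (f := atTop (α := ℕ))).sub hpart
  rw [sub_self] at this
  exact (funext key : V r = _) ▸ this

lemma row_est (r : ℤ → ℂ) (hsum : Summable fun k => ‖r k‖) (n : ℕ) (hn : 0 < n) (i : Fin n) :
    ∑ j : Fin n, ∑' (s : (↑((↑({0} : Finset ℤ) : Set ℤ)ᶜ) : Type)), ‖r ((i : ℤ) - (j : ℤ) - (n : ℤ) * s)‖
      ≤ V r ((i : ℕ) + 1) + V r (n - (i : ℕ)) := by
  classical
  set e : Fin n × (↑((↑({0} : Finset ℤ) : Set ℤ)ᶜ) : Type) → ℤ :=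
    fun p => (i : ℤ) - (p.1 : ℤ) - (n : ℤ) * (p.2 : ℤ) with he_def
  have he : Function.Injective e := by
    rintro ⟨j, s, hs⟩ ⟨j', s', hs'⟩ h
    simp only [he_def] at h
    have h1 : (j' : ℤ) - (j : ℤ) = (n : ℤ) * ((s : ℤ) - (s' : ℤ)) := by linear_combination h
    have h2 : |(j' : ℤ) - (j : ℤ)| < n := by
      have := j.isLt; have := j'.isLt
      rw [abs_sub_lt_iff]; omega
    have h3 : (s : ℤ) = s' := by
      by_contra hne
      have h4 : 1 ≤ |(s : ℤ) - (s' : ℤ)| := Int.one_le_abs (by omega)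
      have h5 : |(j' : ℤ) - (j : ℤ)| = (n : ℤ) * |(s : ℤ) - (s' : ℤ)| := by
        rw [h1, abs_mul, abs_of_nonneg (by positivity : (0:ℤ) ≤ (n:ℤ))]
      nlinarith
    have h6 : (j : ℤ) = j' := by
      rw [h3] at h1; omega
    exact Prod.ext (Fin.ext (by exact_mod_cast h6)) (Subtype.ext h3)
  set g : ℤ → ℝ := fun k => if ((i : ℤ) + 1 ≤ k ∨ k ≤ (i : ℤ) - n) then ‖r k‖ else 0 with hg_def
  have hgsum : Summable g := by
    refine Summable.of_nonneg_of_le (fun k => ?_) (fun k => ?_) hsum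
    · simp only [hg_def]; split <;> simp [norm_nonneg]
    · simp only [hg_def]; split <;> simp [norm_nonneg]
  have hregion : ∀ p, ‖r (e p)‖ = g (e p) := by
    rintro ⟨j, s, hs⟩
    have hs' : (s : ℤ) ≠ 0 := by simpa using hs
    have hj := j.isLt
    have : ((i : ℤ) + 1 ≤ e (⟨j, s, hs⟩) ∨ e (⟨j, s, hs⟩) ≤ (i : ℤ) - n) := by
      simp only [he_def]
      rcases lt_or_gt_of_ne hs' with hneg | hpos
      · left
        have h7 : (n : ℤ) * s ≤ -n := by
          have : (s : ℤ) ≤ -1 := by omega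
          nlinarith [show (0:ℤ) ≤ n by positivity]
        omega
      · right
        have h7 : (n : ℤ) ≤ (n : ℤ) * s := by
          nlinarith [show (0:ℤ) ≤ n by positivity]
        omega
    simp only [hg_def]
    rw [if_pos this]
  have hsum_e : Summable (fun p => ‖r (e p)‖) := by
    have := hgsum.comp_injective he
    exact this.congr fun p => (hregion p).symm
  have step1 : ∑ j : Fin n,
      ∑' (s : (↑((↑({0} : Finset ℤ) : Set ℤ)ᶜ) : Type)), ‖r ((i : ℤ) - (j : ℤ) - (n : ℤ) * s)‖
      = ∑' p, ‖r (e p)‖ := by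
    calc ∑ j : Fin n,
        ∑' (s : (↑((↑({0} : Finset ℤ) : Set ℤ)ᶜ) : Type)), ‖r ((i : ℤ) - (j : ℤ) - (n : ℤ) * s)‖
        = ∑' (j : Fin n),
          ∑' (s : (↑((↑({0} : Finset ℤ) : Set ℤ)ᶜ) : Type)), ‖r ((i : ℤ) - (j : ℤ) - (n : ℤ) * s)‖ :=
          (tsum_fintype _).symm
      _ = ∑' p, ‖r (e p)‖ :=
          (Summable.tsum_prod' hsum_e fun j => hsum_e.comp_injective
            (fun a b hab => by simpa using hab)).symm
  rw [step1]
  have hgnn : ∀ k, 0 ≤ g k := by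
    intro k; simp only [hg_def]; split
    · exact norm_nonneg _
    · exact le_refl 0
  have hcomp : ∑' p, ‖r (e p)‖ ≤ ∑' k, g k := by
    refine le_trans (le_of_eq (tsum_congr hregion)) ?_
    exact tsum_comp_le_tsum_of_inj hgsum hgnn he
  refine hcomp.trans ?_
  rw [V, V, ← Summable.tsum_add (V_summand_summable r hsum _) (V_summand_summable r hsum _)]
  refine Summable.tsum_le_tsum (fun k => ?_) hgsum
    ((V_summand_summable r hsum _).add (V_summand_summable r hsum _))
  simp only [hg_def]
  have hi := i.isLt
  by_cases h : ((i : ℤ) + 1 ≤ k ∨ k ≤ (i : ℤ) - n)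
  · rw [if_pos h]
    rcases h with h | h
    · have h1 : (((i : ℕ) + 1 : ℕ) : ℤ) ≤ |k| := by
        have hk : 0 < k := by omega
        rw [abs_of_pos hk]; push_cast; omega
      rw [if_pos h1]
      have : (0:ℝ) ≤ (if ((n - (i : ℕ) : ℕ) : ℤ) ≤ |k| then ‖r k‖ else 0) := by
        split
        · exact norm_nonneg _
        · exact le_refl 0
      linarith
    · have h1 : (((n - (i : ℕ) : ℕ)) : ℤ) ≤ |k| := by
        have hk : k < 0 := by omega
        rw [abs_of_neg hk]
        have : ((n - (i : ℕ) : ℕ) : ℤ) = (n : ℤ) - (i : ℕ) := by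
          rw [Nat.cast_sub hi.le]
        omega
      rw [if_pos h1]
      have : (0:ℝ) ≤ (if (((i : ℕ) + 1 : ℕ) : ℤ) ≤ |k| then ‖r k‖ else 0) := by
        split
        · exact norm_nonneg _
        · exact le_refl 0
      linarith
  · rw [if_neg h]
    have h2 : (0:ℝ) ≤ (if (((i : ℕ) + 1 : ℕ) : ℤ) ≤ |k| then ‖r k‖ else 0) := by
      split
      · exact norm_nonneg _
      · exact le_refl 0
    have h3 : (0:ℝ) ≤ (if ((n - (i : ℕ) : ℕ) : ℤ) ≤ |k| then ‖r k‖ else 0) := by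
      split
      · exact norm_nonneg _
      · exact le_refl 0
    linarith

lemma L1_T_sub_C_le (r : ℤ → ℂ) (hsum : Summable fun k => ‖r k‖) (f : ℝ → ℝ)
    (hf : ∀ ω : ℝ, (f ω : ℂ) = ∑' k : ℤ, r k * Complex.exp (-Complex.I * (k : ℂ) * (ω : ℂ)))
    (n : ℕ) (hn : 0 < n) (T : Matrix (Fin n) (Fin n) ℂ)
    (hT : ∀ i j : Fin n, T i j = r ((i : ℤ) - (j : ℤ))) :
    L1 (T - Cmat f n) ≤ ∑ i : Fin n, (V r ((i : ℕ) + 1) + V r (n - (i : ℕ))) := by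
  have hrs : Summable r := hsum.of_norm
  rw [L1]
  refine Finset.sum_le_sum fun i _ => le_trans (Finset.sum_le_sum fun j _ => ?_)
    (row_est r hsum n hn i)
  set d : ℤ := (i : ℤ) - (j : ℤ) with hd
  have hinj : Function.Injective (fun s : ℤ => d - (n : ℤ) * s) := by
    intro s1 s2 h
    simp only [sub_right_inj] at h
    exact mul_left_cancel₀ (by exact_mod_cast hn.ne' : (n : ℤ) ≠ 0) h
  have hsummable : Summable (fun s : ℤ => r (d - (n : ℤ) * s)) := hrs.comp_injective hinj
  have hsummable' : Summable (fun s : ℤ => ‖r (d - (n : ℤ) * s)‖) := hsum.comp_injective hinj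
  have hsplit := Summable.sum_add_tsum_compl (s := ({0} : Finset ℤ)) hsummable
  have hzero : ∑ s ∈ ({0} : Finset ℤ), r (d - (n : ℤ) * s) = r d := by
    rw [Finset.sum_singleton, mul_zero, sub_zero]
  have hentry : (T - Cmat f n) i j
      = -∑' (s : (↑((↑({0} : Finset ℤ) : Set ℤ)ᶜ) : Type)), r (d - (n : ℤ) * s) := by
    rw [Matrix.sub_apply, hT i j, Cmat_entry r hsum f hf n hn i j, ← hsplit, hzero]
    ring
  rw [hentry, norm_neg]
  exact norm_tsum_le_tsum_norm (hsummable'.subtype _)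

lemma L1_tendsto (r : ℤ → ℂ) (hsum : Summable fun k => ‖r k‖) (f : ℝ → ℝ)
    (hf : ∀ ω : ℝ, (f ω : ℂ) = ∑' k : ℤ, r k * Complex.exp (-Complex.I * (k : ℂ) * (ω : ℂ)))
    (T : (n : ℕ) → Matrix (Fin n) (Fin n) ℂ)
    (hT : ∀ (n : ℕ) (i j : Fin n), T n i j = r ((i : ℤ) - (j : ℤ))) :
    Tendsto (fun n : ℕ => (1 / (n : ℝ)) * L1 (T n - Cmat f n)) atTop (nhds 0) := by
  have hu : Tendsto (fun i : ℕ => V r (i + 1)) atTop (nhds 0) :=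
    (V_tendsto r hsum).comp (tendsto_add_atTop_nat 1)
  have hces : Tendsto (fun n : ℕ => (n : ℝ)⁻¹ • ∑ i ∈ Finset.range n, V r (i + 1))
      atTop (nhds 0) := hu.cesaro
  have hB : Tendsto (fun n : ℕ => 2 * ((n : ℝ)⁻¹ • ∑ i ∈ Finset.range n, V r (i + 1)))
      atTop (nhds 0) := by
    have := hces.const_mul (2 : ℝ)
    simpa using this
  refine squeeze_zero (fun n => ?_) (fun n => ?_) hB
  · have h1 : (0:ℝ) ≤ 1 / (n : ℝ) := by positivity
    exact mul_nonneg h1 (L1_nonneg _)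
  · rcases Nat.eq_zero_or_pos n with rfl | hn
    · simp
    · have hest := L1_T_sub_C_le r hsum f hf n hn (T n) (hT n)
      have hsum_eq : ∑ i : Fin n, (V r ((i : ℕ) + 1) + V r (n - (i : ℕ)))
          = 2 * ∑ i ∈ Finset.range n, V r (i + 1) := by
        rw [Fin.sum_univ_eq_sum_range (fun i => V r (i + 1) + V r (n - i)) n,
          Finset.sum_add_distrib]
        have hrefl : ∑ i ∈ Finset.range n, V r (n - i)
            = ∑ i ∈ Finset.range n, V r (i + 1) := by
          rw [← Finset.sum_range_reflect (fun i => V r (i + 1)) n]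
          refine Finset.sum_congr rfl fun j hj => ?_
          rw [Finset.mem_range] at hj
          congr 1
          omega
        rw [hrefl]; ring
      rw [hsum_eq] at hest
      have h1 : (0:ℝ) ≤ 1 / (n : ℝ) := by positivity
      calc (1 / (n : ℝ)) * L1 (T n - Cmat f n)
          ≤ (1 / (n : ℝ)) * (2 * ∑ i ∈ Finset.range n, V r (i + 1)) :=
            mul_le_mul_of_nonneg_left hest h1
        _ = 2 * ((n : ℝ)⁻¹ • ∑ i ∈ Finset.range n, V r (i + 1)) := by
            rw [smul_eq_mul]; ring

section Bounds

variable (r : ℤ → ℂ) (hsum : Summable fun k => ‖r k‖)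

include hsum in
lemma finsum_comp_le {n : ℕ} (σ : Fin n → ℤ) (hσ : Function.Injective σ) :
    ∑ j : Fin n, ‖r (σ j)‖ ≤ ∑' k : ℤ, ‖r k‖ := by
  rw [← tsum_fintype (L := SummationFilter.unconditional _)]
  exact tsum_comp_le_tsum_of_inj hsum (fun k => norm_nonneg _) hσ

include hsum in
lemma norm_r_le (k : ℤ) : ‖r k‖ ≤ ∑' k : ℤ, ‖r k‖ :=
  Summable.le_tsum hsum k fun _ _ => norm_nonneg _

include hsum in
lemma T_rowsum_le {n : ℕ} (T : Matrix (Fin n) (Fin n) ℂ)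
    (hT : ∀ i j : Fin n, T i j = r ((i : ℤ) - (j : ℤ))) (i : Fin n) :
    ∑ j : Fin n, ‖T i j‖ ≤ ∑' k : ℤ, ‖r k‖ := by
  have : ∀ j : Fin n, ‖T i j‖ = ‖r ((i : ℤ) - (j : ℤ))‖ := fun j => by rw [hT]
  rw [Finset.sum_congr rfl fun j _ => this j]
  refine finsum_comp_le r hsum _ fun a b hab => ?_
  simp only [sub_right_inj] at hab
  exact Fin.ext (by exact_mod_cast hab)

include hsum in
lemma T_colsum_le {n : ℕ} (T : Matrix (Fin n) (Fin n) ℂ)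
    (hT : ∀ i j : Fin n, T i j = r ((i : ℤ) - (j : ℤ))) (j : Fin n) :
    ∑ i : Fin n, ‖T i j‖ ≤ ∑' k : ℤ, ‖r k‖ := by
  have : ∀ i : Fin n, ‖T i j‖ = ‖r ((i : ℤ) - (j : ℤ))‖ := fun i => by rw [hT]
  rw [Finset.sum_congr rfl fun i _ => this i]
  refine finsum_comp_le r hsum _ fun a b hab => ?_
  simp only [sub_left_inj] at hab
  exact Fin.ext (by exact_mod_cast hab)

include hsum in
lemma C_norm_entry_le (f : ℝ → ℝ)
    (hf : ∀ ω : ℝ, (f ω : ℂ) = ∑' k : ℤ, r k * Complex.exp (-Complex.I * (k : ℂ) * (ω : ℂ)))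
    {n : ℕ} (hn : 0 < n) (i j : Fin n) :
    ‖Cmat f n i j‖ ≤ ∑' (s : ℤ), ‖r ((i : ℤ) - (j : ℤ) - (n : ℤ) * s)‖ := by
  rw [Cmat_entry r hsum f hf n hn i j]
  have hinj : Function.Injective (fun s : ℤ => (i : ℤ) - (j : ℤ) - (n : ℤ) * s) := by
    intro s1 s2 h
    simp only [sub_right_inj] at h
    exact mul_left_cancel₀ (by exact_mod_cast hn.ne' : (n : ℤ) ≠ 0) h
  exact norm_tsum_le_tsum_norm (hsum.comp_injective hinj)

lemma prod_inj_row {n : ℕ} (hn : 0 < n) (c : ℤ) :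
    Function.Injective (fun p : Fin n × ℤ => c - (p.1 : ℤ) - (n : ℤ) * p.2) := by
  rintro ⟨j, s⟩ ⟨j', s'⟩ h
  simp only at h
  have h1 : (j' : ℤ) - (j : ℤ) = (n : ℤ) * (s - s') := by linear_combination h
  have h2 : |(j' : ℤ) - (j : ℤ)| < n := by
    have := j.isLt; have := j'.isLt
    rw [abs_sub_lt_iff]; omega
  have h3 : s = s' := by
    by_contra hne
    have h4 : 1 ≤ |s - s'| := Int.one_le_abs (by omega)
    have h5 : |(j' : ℤ) - (j : ℤ)| = (n : ℤ) * |s - s'| := by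
      rw [h1, abs_mul, abs_of_nonneg (by positivity : (0:ℤ) ≤ (n:ℤ))]
    nlinarith
  have h6 : (j : ℤ) = j' := by rw [h3] at h1; omega
  exact Prod.ext (Fin.ext (by exact_mod_cast h6)) h3

lemma prod_inj_col {n : ℕ} (hn : 0 < n) (c : ℤ) :
    Function.Injective (fun p : Fin n × ℤ => (p.1 : ℤ) - c - (n : ℤ) * p.2) := by
  rintro ⟨j, s⟩ ⟨j', s'⟩ h
  simp only at h
  have h1 : (j : ℤ) - (j' : ℤ) = (n : ℤ) * (s - s') := by linear_combination h
  have h2 : |(j : ℤ) - (j' : ℤ)| < n := by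
    have := j.isLt; have := j'.isLt
    rw [abs_sub_lt_iff]; omega
  have h3 : s = s' := by
    by_contra hne
    have h4 : 1 ≤ |s - s'| := Int.one_le_abs (by omega)
    have h5 : |(j : ℤ) - (j' : ℤ)| = (n : ℤ) * |s - s'| := by
      rw [h1, abs_mul, abs_of_nonneg (by positivity : (0:ℤ) ≤ (n:ℤ))]
    nlinarith
  have h6 : (j : ℤ) = j' := by rw [h3] at h1; omega
  exact Prod.ext (Fin.ext (by exact_mod_cast h6)) h3

include hsum in
lemma sum_tsum_prod_le {n : ℕ} (e : Fin n × ℤ → ℤ) (he : Function.Injective e) :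
    ∑ j : Fin n, ∑' (s : ℤ), ‖r (e (j, s))‖ ≤ ∑' k : ℤ, ‖r k‖ := by
  have hsum_e : Summable (fun p : Fin n × ℤ => ‖r (e p)‖) := hsum.comp_injective he
  have h1 : ∑ j : Fin n, ∑' (s : ℤ), ‖r (e (j, s))‖ = ∑' p : Fin n × ℤ, ‖r (e p)‖ := by
    calc ∑ j : Fin n, ∑' (s : ℤ), ‖r (e (j, s))‖
        = ∑' (j : Fin n), ∑' (s : ℤ), ‖r (e (j, s))‖ := (tsum_fintype _).symm
      _ = ∑' p : Fin n × ℤ, ‖r (e p)‖ :=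
          (Summable.tsum_prod' hsum_e fun j => hsum_e.comp_injective
            (fun a b hab => by simpa using hab)).symm
  rw [h1]
  exact tsum_comp_le_tsum_of_inj hsum (fun k => norm_nonneg _) he

include hsum in
lemma C_rowsum_le (f : ℝ → ℝ)
    (hf : ∀ ω : ℝ, (f ω : ℂ) = ∑' k : ℤ, r k * Complex.exp (-Complex.I * (k : ℂ) * (ω : ℂ)))
    {n : ℕ} (hn : 0 < n) (i : Fin n) :
    ∑ j : Fin n, ‖Cmat f n i j‖ ≤ ∑' k : ℤ, ‖r k‖ := by
  refine le_trans (Finset.sum_le_sum fun j _ => C_norm_entry_le r hsum f hf hn i j) ?_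
  have := sum_tsum_prod_le r hsum (fun p : Fin n × ℤ => (i : ℤ) - (p.1 : ℤ) - (n : ℤ) * p.2)
    (prod_inj_row hn (i : ℤ))
  exact this

include hsum in
lemma C_colsum_le (f : ℝ → ℝ)
    (hf : ∀ ω : ℝ, (f ω : ℂ) = ∑' k : ℤ, r k * Complex.exp (-Complex.I * (k : ℂ) * (ω : ℂ)))
    {n : ℕ} (hn : 0 < n) (j : Fin n) :
    ∑ i : Fin n, ‖Cmat f n i j‖ ≤ ∑' k : ℤ, ‖r k‖ := by
  refine le_trans (Finset.sum_le_sum fun i _ => C_norm_entry_le r hsum f hf hn i j) ?_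
  have := sum_tsum_prod_le r hsum (fun p : Fin n × ℤ => (p.1 : ℤ) - (j : ℤ) - (n : ℤ) * p.2)
    (prod_inj_col hn (j : ℤ))
  exact this

end Bounds

lemma entry_pow_le {n : ℕ} (A : Matrix (Fin n) (Fin n) ℂ) {M : ℝ} (hM : 0 ≤ M)
    (hrow : ∀ i, ∑ j, ‖A i j‖ ≤ M) (hE : ∀ i j, ‖A i j‖ ≤ M) :
    ∀ m : ℕ, 1 ≤ m → ∀ i j, ‖(A ^ m) i j‖ ≤ M ^ m := by
  intro m hm i j
  rcases Nat.exists_eq_add_of_le hm with ⟨s, hs⟩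
  rcases Nat.eq_zero_or_pos s with rfl | hs1
  · simpa [hs] using hE i j
  · have hrs := rowsum_pow_le A hM hrow s hs1 i
    rw [hs, add_comm, pow_succ, pow_succ]
    rw [Matrix.mul_apply]
    refine (norm_sum_le _ _).trans ?_
    have h1 : ∀ k, ‖(A ^ s) i k * A k j‖ ≤ ‖(A ^ s) i k‖ * M := by
      intro k
      rw [norm_mul]
      exact mul_le_mul_of_nonneg_left (hE k j) (norm_nonneg _)
    refine (Finset.sum_le_sum fun k _ => h1 k).trans ?_
    rw [← Finset.sum_mul]
    exact mul_le_mul_of_nonneg_right hrs hM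

variable (r : ℤ → ℂ) (hsum : Summable fun k => ‖r k‖)

include hsum in
lemma eig_bound (T : (n : ℕ) → Matrix (Fin n) (Fin n) ℂ)
    (hT : ∀ (n : ℕ) (i j : Fin n), T n i j = r ((i : ℤ) - (j : ℤ)))
    (hHerm : ∀ n : ℕ, (T n).IsHermitian) (n : ℕ) (i : Fin n) :
    |(hHerm n).eigenvalues i| ≤ ∑' k : ℤ, ‖r k‖ := by
  set M := ∑' k : ℤ, ‖r k‖ with hM
  have hM0 : 0 ≤ M := tsum_nonneg fun k => norm_nonneg _
  set lam := (hHerm n).eigenvalues i with hlam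
  have key : ∀ m : ℕ, 1 ≤ m → lam ^ (2 * m) ≤ (n : ℝ) * M ^ (2 * m) := by
    intro m hm
    have h2m : 1 ≤ 2 * m := by omega
    have htr := trace_hermitian_pow (T n) (hHerm n) (2 * m) h2m
    have htr' : Matrix.trace ((T n) ^ (2 * m))
        = ((∑ j : Fin n, (hHerm n).eigenvalues j ^ (2 * m) : ℝ) : ℂ) := by
      rw [htr]; push_cast; rfl
    have hnn : ∀ j : Fin n, 0 ≤ (hHerm n).eigenvalues j ^ (2 * m) := by
      intro j
      rw [pow_mul]
      exact pow_nonneg (sq_nonneg _) m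
    have hstep1 : lam ^ (2 * m) ≤ ∑ j : Fin n, (hHerm n).eigenvalues j ^ (2 * m) :=
      Finset.single_le_sum (fun j _ => hnn j) (Finset.mem_univ i)
    have hstep2 : (∑ j : Fin n, (hHerm n).eigenvalues j ^ (2 * m))
        ≤ ‖Matrix.trace ((T n) ^ (2 * m))‖ := by
      rw [htr']
      rw [Complex.norm_real, Real.norm_eq_abs]
      exact le_abs_self _
    have hstep3 : ‖Matrix.trace ((T n) ^ (2 * m))‖ ≤ (n : ℝ) * M ^ (2 * m) := by
      have hent := entry_pow_le (T n) hM0 (T_rowsum_le r hsum (T n) (hT n))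
        (fun a b => by rw [hT n a b]; exact norm_r_le r hsum _) (2 * m) h2m
      rw [Matrix.trace]
      refine (norm_sum_le _ _).trans ?_
      have : ∀ a : Fin n, ‖Matrix.diag ((T n) ^ (2 * m)) a‖ ≤ M ^ (2 * m) :=
        fun a => hent a a
      refine (Finset.sum_le_sum fun a _ => this a).trans ?_
      rw [Finset.sum_const, Finset.card_univ, Fintype.card_fin, nsmul_eq_mul]
    linarith
  by_contra hlt
  push_neg at hlt
  have hlam0 : 0 < |lam| := lt_of_le_of_lt hM0 hlt
  have habs : ∀ m : ℕ, 1 ≤ m → |lam| ^ (2 * m) ≤ (n : ℝ) * M ^ (2 * m) := by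
    intro m hm
    have : |lam| ^ (2 * m) = lam ^ (2 * m) := by
      rw [← abs_pow]
      refine abs_of_nonneg ?_
      rw [pow_mul]; exact pow_nonneg (sq_nonneg _) m
    rw [this]; exact key m hm
  rcases eq_or_lt_of_le hM0 with hM0' | hMpos
  · have h1 := habs 1 le_rfl
    rw [← hM0'] at h1
    norm_num at h1
    nlinarith [sq_abs lam, pow_pos hlam0 2]
  · have hq : 1 < |lam| / M := (one_lt_div hMpos).mpr hlt
    obtain ⟨m0, hm0⟩ := pow_unbounded_of_one_lt (n : ℝ) hq
    set m := max m0 1 with hm_def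
    have hm1 : 1 ≤ m := le_max_right _ _
    have hle : (|lam| / M) ^ m0 ≤ (|lam| / M) ^ (2 * m) := by
      refine pow_le_pow_right₀ hq.le ?_
      omega
    have h2 : (|lam| / M) ^ (2 * m) ≤ (n : ℝ) := by
      rw [div_pow, div_le_iff₀ (pow_pos hMpos _)]
      exact habs m hm1
    linarith

include hsum in
lemma sample_bound (f : ℝ → ℝ)
    (hf : ∀ ω : ℝ, (f ω : ℂ) = ∑' k : ℤ, r k * Complex.exp (-Complex.I * (k : ℂ) * (ω : ℂ)))
    (ω : ℝ) : |f ω| ≤ ∑' k : ℤ, ‖r k‖ := by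
  have h1 : ‖((f ω : ℝ) : ℂ)‖ = |f ω| := by
    rw [Complex.norm_real, Real.norm_eq_abs]
  rw [← h1, hf ω]
  have h2 : ∀ k : ℤ, ‖r k * Complex.exp (-Complex.I * (k : ℂ) * (ω : ℂ))‖ = ‖r k‖ := by
    intro k
    rw [norm_mul, expI_eq_eC, norm_eC, mul_one]
  refine le_trans (norm_tsum_le_tsum_norm ?_) (le_of_eq (tsum_congr h2))
  exact hsum.congr fun k => (h2 k).symm

include hsum in
lemma moment (f : ℝ → ℝ)
    (hf : ∀ ω : ℝ, (f ω : ℂ) = ∑' k : ℤ, r k * Complex.exp (-Complex.I * (k : ℂ) * (ω : ℂ)))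
    (T : (n : ℕ) → Matrix (Fin n) (Fin n) ℂ)
    (hT : ∀ (n : ℕ) (i j : Fin n), T n i j = r ((i : ℤ) - (j : ℤ)))
    (hHerm : ∀ n : ℕ, (T n).IsHermitian) (m : ℕ) (hm : 1 ≤ m) :
    Tendsto (fun n : ℕ => (1 / (n : ℝ)) *
      ((∑ i : Fin n, ((hHerm n).eigenvalues i) ^ m)
        - ∑ i : Fin n, (f (2 * Real.pi * (i : ℝ) / (n : ℝ))) ^ m)) atTop (nhds 0) := by
  set M := ∑' k : ℤ, ‖r k‖ with hM
  have hM0 : 0 ≤ M := tsum_nonneg fun k => norm_nonneg _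
  have hconst : Tendsto (fun n : ℕ =>
      ((m : ℝ) * M ^ (m - 1)) * ((1 / (n : ℝ)) * L1 (T n - Cmat f n))) atTop (nhds 0) := by
    have := (L1_tendsto r hsum f hf T hT).const_mul ((m : ℝ) * M ^ (m - 1))
    simpa using this
  refine squeeze_zero_norm (fun n => ?_) hconst
  rcases Nat.eq_zero_or_pos n with rfl | hn
  · simp
  · have h1 := trace_hermitian_pow (T n) (hHerm n) m hm
    have h2 := trace_Cmat_pow f n hn m hm
    have h1' : Matrix.trace ((T n) ^ m)
        = ((∑ i : Fin n, (hHerm n).eigenvalues i ^ m : ℝ) : ℂ) := by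
      rw [h1]; push_cast; rfl
    have h2' : Matrix.trace ((Cmat f n) ^ m)
        = ((∑ i : Fin n, (f (2 * Real.pi * (i : ℝ) / (n : ℝ))) ^ m : ℝ) : ℂ) := by
      rw [h2]; push_cast; rfl
    have hdiff : |(∑ i : Fin n, ((hHerm n).eigenvalues i) ^ m)
        - ∑ i : Fin n, (f (2 * Real.pi * (i : ℝ) / (n : ℝ))) ^ m|
        = ‖Matrix.trace ((T n) ^ m - (Cmat f n) ^ m)‖ := by
      rw [Matrix.trace_sub, h1', h2', ← Complex.ofReal_sub,
        Complex.norm_real, Real.norm_eq_abs]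
    have hbound : ‖Matrix.trace ((T n) ^ m - (Cmat f n) ^ m)‖
        ≤ (m : ℝ) * M ^ (m - 1) * L1 (T n - Cmat f n) := by
      refine (norm_trace_le_L1 _).trans ?_
      exact L1_pow_sub_le (T n) (Cmat f n) hM0 (T_colsum_le r hsum (T n) (hT n))
        (C_rowsum_le r hsum f hf hn) m hm
    rw [norm_mul, Real.norm_eq_abs, Real.norm_eq_abs, hdiff]
    have h3 : |1 / (n : ℝ)| = 1 / (n : ℝ) := abs_of_nonneg (by positivity)
    rw [h3]
    calc (1 / (n : ℝ)) * ‖Matrix.trace ((T n) ^ m - (Cmat f n) ^ m)‖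
        ≤ (1 / (n : ℝ)) * ((m : ℝ) * M ^ (m - 1) * L1 (T n - Cmat f n)) :=
          mul_le_mul_of_nonneg_left hbound (by positivity)
      _ = ((m : ℝ) * M ^ (m - 1)) * ((1 / (n : ℝ)) * L1 (T n - Cmat f n)) := by ring

end ToepAux



/-- The averaged difference between `g` evaluated at the Toeplitz eigenvalues and
`g` evaluated at the `n` uniform samples `ξ_i = f(2π(i-1)/n)` of the spectrum
vanishes as `n → ∞`, for every continuous `g`. -/
theorem toeplitz_eigenvalues_vs_uniform_samples
    (r : ℤ → ℂ) (hsum : Summable fun k => ‖r k‖)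
    (hconj : ∀ k : ℤ, r (-k) = starRingEnd ℂ (r k))
    (f : ℝ → ℝ)
    (hf : ∀ ω : ℝ, (f ω : ℂ) = ∑' k : ℤ, r k * Complex.exp (-Complex.I * (k : ℂ) * (ω : ℂ)))
    (T : (n : ℕ) → Matrix (Fin n) (Fin n) ℂ)
    (hT : ∀ (n : ℕ) (i j : Fin n), T n i j = r ((i : ℤ) - (j : ℤ)))
    (hHerm : ∀ n : ℕ, (T n).IsHermitian)
    (g : ℝ → ℝ) (hg : Continuous g) :
    Tendsto
      (fun n : ℕ => (1 / (n : ℝ)) *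
        |(∑ i : Fin n, g ((hHerm n).eigenvalues i)) -
          ∑ i : Fin n, g (f (2 * Real.pi * (i : ℝ) / (n : ℝ)))|)
      atTop (nhds 0) := by
  classical
  set M := ∑' k : ℤ, ‖r k‖ with hMdef
  have hM0 : (0:ℝ) ≤ M := tsum_nonneg fun k => norm_nonneg _
  have hpoly : ∀ P : Polynomial ℝ, Tendsto (fun n : ℕ => (1 / (n : ℝ)) *
      ((∑ i : Fin n, Polynomial.eval ((hHerm n).eigenvalues i) P)
        - ∑ i : Fin n, Polynomial.eval (f (2 * Real.pi * (i : ℝ) / (n : ℝ))) P))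
      atTop (nhds 0) := by
    intro P
    have hterm : ∀ k ∈ Finset.range (P.natDegree + 1), Tendsto (fun n : ℕ =>
        P.coeff k * ((1 / (n : ℝ)) * ((∑ i : Fin n, ((hHerm n).eigenvalues i) ^ k)
          - ∑ i : Fin n, (f (2 * Real.pi * (i : ℝ) / (n : ℝ))) ^ k))) atTop (nhds 0) := by
      intro k _
      rcases Nat.eq_zero_or_pos k with rfl | hk
      · have hzero : (fun n : ℕ => P.coeff 0 * ((1 / (n : ℝ))
            * ((∑ i : Fin n, ((hHerm n).eigenvalues i) ^ 0)
              - ∑ i : Fin n, (f (2 * Real.pi * (i : ℝ) / (n : ℝ))) ^ 0)))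
            = fun _ => (0:ℝ) := by
          funext n; simp
        rw [hzero]; exact tendsto_const_nhds
      · have := (ToepAux.moment r hsum f hf T hT hHerm k hk).const_mul (P.coeff k)
        simpa using this
    have hsum_t := tendsto_finset_sum (Finset.range (P.natDegree + 1)) hterm
    rw [Finset.sum_const_zero] at hsum_t
    refine hsum_t.congr fun n => ?_
    have h1 : ∀ w : Fin n → ℝ, ∑ i : Fin n, Polynomial.eval (w i) P
        = ∑ k ∈ Finset.range (P.natDegree + 1), P.coeff k * ∑ i : Fin n, w i ^ k := by
      intro w
      rw [Finset.sum_congr rfl fun i _ => Polynomial.eval_eq_sum_range (x := w i)]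
      rw [Finset.sum_comm]
      exact Finset.sum_congr rfl fun k _ => (Finset.mul_sum _ _ _).symm
    rw [h1, h1, ← Finset.sum_sub_distrib, Finset.mul_sum]
    refine (Finset.sum_congr rfl fun k _ => ?_).symm
    rw [← mul_sub]
    ring
  rw [NormedAddCommGroup.tendsto_nhds_zero]
  intro ε hε
  have hε4 : 0 < ε / 4 := by linarith
  obtain ⟨P, hP⟩ := exists_polynomial_near_of_continuousOn (-M) M g hg.continuousOn (ε/4) hε4
  have hev1 := NormedAddCommGroup.tendsto_nhds_zero.mp (hpoly P) (ε/4) hε4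
  filter_upwards [hev1, eventually_ge_atTop 1] with n hn1 hn2
  have hnpos : (0:ℝ) < (n : ℝ) := by exact_mod_cast hn2
  have hζmem : ∀ i : Fin n, (hHerm n).eigenvalues i ∈ Set.Icc (-M) M := by
    intro i
    have h := ToepAux.eig_bound r hsum T hT hHerm n i
    rw [abs_le] at h
    exact Set.mem_Icc.mpr ⟨h.1, h.2⟩
  have hξmem : ∀ i : Fin n, f (2 * Real.pi * (i : ℝ) / (n : ℝ)) ∈ Set.Icc (-M) M := by
    intro i
    have h := ToepAux.sample_bound r hsum f hf (2 * Real.pi * (i : ℝ) / (n : ℝ))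
    rw [abs_le] at h
    exact Set.mem_Icc.mpr ⟨h.1, h.2⟩
  have hgP : ∀ x ∈ Set.Icc (-M) M, |g x - Polynomial.eval x P| ≤ ε/4 := by
    intro x hx
    have := hP x hx
    rw [abs_sub_comm] at this
    linarith
  set A := ∑ i : Fin n, g ((hHerm n).eigenvalues i) with hA
  set B := ∑ i : Fin n, g (f (2 * Real.pi * (i : ℝ) / (n : ℝ))) with hB
  set PA := ∑ i : Fin n, Polynomial.eval ((hHerm n).eigenvalues i) P with hPA
  set PB := ∑ i : Fin n, Polynomial.eval (f (2 * Real.pi * (i : ℝ) / (n : ℝ))) P with hPB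
  have hAPA : |A - PA| ≤ (n : ℝ) * (ε/4) := by
    rw [hA, hPA, ← Finset.sum_sub_distrib]
    refine (Finset.abs_sum_le_sum_abs _ _).trans ?_
    refine le_trans (Finset.sum_le_sum fun i _ => hgP _ (hζmem i)) ?_
    rw [Finset.sum_const, Finset.card_univ, Fintype.card_fin, nsmul_eq_mul]
  have hBPB : |PB - B| ≤ (n : ℝ) * (ε/4) := by
    rw [hB, hPB, ← Finset.sum_sub_distrib]
    refine (Finset.abs_sum_le_sum_abs _ _).trans ?_
    have : ∀ i : Fin n, |Polynomial.eval (f (2 * Real.pi * (i : ℝ) / (n : ℝ))) P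
        - g (f (2 * Real.pi * (i : ℝ) / (n : ℝ)))| ≤ ε/4 := by
      intro i
      rw [abs_sub_comm]
      exact hgP _ (hξmem i)
    refine le_trans (Finset.sum_le_sum fun i _ => this i) ?_
    rw [Finset.sum_const, Finset.card_univ, Fintype.card_fin, nsmul_eq_mul]
  have hmid : (1 / (n : ℝ)) * |PA - PB| < ε/4 := by
    have : ‖(1 / (n : ℝ)) * (PA - PB)‖ < ε/4 := hn1
    rw [norm_mul, Real.norm_eq_abs, Real.norm_eq_abs,
      abs_of_nonneg (by positivity : (0:ℝ) ≤ 1 / (n:ℝ))] at this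
    exact this
  have htri : |A - B| ≤ |A - PA| + |PA - PB| + |PB - B| := by
    calc |A - B| ≤ |A - PA| + |PA - B| := abs_sub_le A PA B
      _ ≤ |A - PA| + (|PA - PB| + |PB - B|) := by
          have := abs_sub_le PA PB B
          linarith
      _ = |A - PA| + |PA - PB| + |PB - B| := by ring
  have hfrac : (1 / (n : ℝ)) * ((n : ℝ) * (ε/4)) = ε/4 := by
    field_simp
  rw [Real.norm_eq_abs]
  have hnn : (0:ℝ) ≤ (1 / (n : ℝ)) * |A - B| := by positivity
  rw [abs_of_nonneg hnn]
  have hle : (1 / (n : ℝ)) * |A - B|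
      ≤ (1 / (n : ℝ)) * (|A - PA| + |PA - PB| + |PB - B|) :=
    mul_le_mul_of_nonneg_left htri (by positivity)
  have hexp : (1 / (n : ℝ)) * (|A - PA| + |PA - PB| + |PB - B|)
      = (1 / (n : ℝ)) * |A - PA| + (1 / (n : ℝ)) * |PA - PB|
        + (1 / (n : ℝ)) * |PB - B| := by ring
  have h5 : (1 / (n : ℝ)) * |A - PA| ≤ ε/4 := by
    calc (1 / (n : ℝ)) * |A - PA| ≤ (1 / (n : ℝ)) * ((n : ℝ) * (ε/4)) :=
        mul_le_mul_of_nonneg_left hAPA (by positivity)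
      _ = ε/4 := hfrac
  have h6 : (1 / (n : ℝ)) * |PB - B| ≤ ε/4 := by
    calc (1 / (n : ℝ)) * |PB - B| ≤ (1 / (n : ℝ)) * ((n : ℝ) * (ε/4)) :=
        mul_le_mul_of_nonneg_left hBPB (by positivity)
      _ = ε/4 := hfrac
  calc (1 / (n : ℝ)) * |A - B|
      ≤ (1 / (n : ℝ)) * |A - PA| + (1 / (n : ℝ)) * |PA - PB|
        + (1 / (n : ℝ)) * |PB - B| := by rw [← hexp]; exact hle
    _ < ε/4 + ε/4 + ε/4 := by
        have := hmid
        linarith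
    _ < ε := by linarith
end ToepAux
end

section
/- Fix real numbers a, b, σ > 0, P > 0, γ > 0. For each positive integer n define F_n := max{ (1/2n) Σ_{i=1}^n log(1 + (μ_i/σ²)·|1+abλ_i|²/(1+b²|λ_i|²)) : μ ∈ ℝⁿ, λ ∈ ℂⁿ, μ_i ≥ 0 for all i, Σ_{i=1}^n μ_i ≤ nP, Σ_{i=1}^n (a²μ_i + σ²)|λ_i|² ≤ nγP }. Then the sequence (nF_n) is superadditive, i.e., (m+n)F_{m+n} ≥ mF_m + nF_n for all m, n ≥ 1, the sequence (F_n) is bounded above, and consequently lim_{n→∞} F_n exists and equals sup_{n≥1} F_n. -/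
open Filter

private def Sset (a b σ P γ : ℝ) (n : ℕ) : Set ℝ :=
  {x : ℝ | ∃ (μ : Fin n → ℝ) (l : Fin n → ℂ),
    (∀ i, 0 ≤ μ i) ∧ (∑ i, μ i ≤ (n : ℝ) * P) ∧
    (∑ i, (a ^ 2 * μ i + σ ^ 2) * ‖l i‖ ^ 2 ≤ (n : ℝ) * γ * P) ∧
    x = (1 / (2 * (n : ℝ))) * ∑ i, Real.log
      (1 + (μ i / σ ^ 2) * ‖1 + ((a * b : ℝ) : ℂ) * l i‖ ^ 2
        / (1 + b ^ 2 * ‖l i‖ ^ 2))}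

private lemma term_nonneg (a b σ : ℝ) (hσ : 0 < σ) {μi : ℝ} (hμ : 0 ≤ μi) (z : ℂ) :
    0 ≤ Real.log (1 + (μi / σ ^ 2) * ‖1 + ((a * b : ℝ) : ℂ) * z‖ ^ 2
      / (1 + b ^ 2 * ‖z‖ ^ 2)) := by
  have h1 : 0 ≤ (μi / σ ^ 2) * ‖1 + ((a * b : ℝ) : ℂ) * z‖ ^ 2 / (1 + b ^ 2 * ‖z‖ ^ 2) := by
    positivity
  exact Real.log_nonneg (by linarith)

private lemma term_bound (a b σ : ℝ) (hσ : 0 < σ) {μi : ℝ} (hμ : 0 ≤ μi) (z : ℂ) :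
    Real.log (1 + (μi / σ ^ 2) * ‖1 + ((a * b : ℝ) : ℂ) * z‖ ^ 2
      / (1 + b ^ 2 * ‖z‖ ^ 2)) ≤ (2 + 2 * a ^ 2) / σ ^ 2 * μi := by
  set s := ‖z‖ ^ 2 with hs
  have hs0 : 0 ≤ s := by positivity
  set N := ‖1 + ((a * b : ℝ) : ℂ) * z‖ ^ 2 with hN
  have hN0 : 0 ≤ N := by positivity
  have hD : (0:ℝ) < 1 + b ^ 2 * s := by positivity
  have hNle : N ≤ 2 + 2 * a ^ 2 * b ^ 2 * s := by
    have h1 : ‖1 + ((a * b : ℝ) : ℂ) * z‖ ≤ 1 + |a * b| * ‖z‖ := by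
      have hnz : ‖((a * b : ℝ) : ℂ) * z‖ = |a * b| * ‖z‖ := by
        rw [norm_mul, Complex.norm_real, Real.norm_eq_abs]
      calc ‖1 + ((a * b : ℝ) : ℂ) * z‖ ≤ ‖(1 : ℂ)‖ + ‖((a * b : ℝ) : ℂ) * z‖ := norm_add_le _ _
        _ = 1 + |a * b| * ‖z‖ := by rw [hnz]; simp
    have h2 : N ≤ (1 + |a * b| * ‖z‖) ^ 2 := by
      rw [hN]
      exact pow_le_pow_left₀ (norm_nonneg _) h1 2
    have h3 : (1 + |a * b| * ‖z‖) ^ 2 ≤ 2 + 2 * (|a * b| * ‖z‖) ^ 2 := by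
      nlinarith [sq_nonneg (|a * b| * ‖z‖ - 1)]
    have h4 : (|a * b| * ‖z‖) ^ 2 = a ^ 2 * b ^ 2 * s := by
      rw [mul_pow, sq_abs, hs]; ring
    nlinarith
  have ht : (μi / σ ^ 2) * N / (1 + b ^ 2 * s) ≤ (2 + 2 * a ^ 2) / σ ^ 2 * μi := by
    rw [div_le_iff₀ hD]
    have hμσ : 0 ≤ μi / σ ^ 2 := by positivity
    have : N ≤ (2 + 2 * a ^ 2) * (1 + b ^ 2 * s) := by nlinarith
    calc (μi / σ ^ 2) * N ≤ (μi / σ ^ 2) * ((2 + 2 * a ^ 2) * (1 + b ^ 2 * s)) :=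
          mul_le_mul_of_nonneg_left this hμσ
      _ = (2 + 2 * a ^ 2) / σ ^ 2 * μi * (1 + b ^ 2 * s) := by ring
  have ht0 : 0 ≤ (μi / σ ^ 2) * N / (1 + b ^ 2 * s) := by positivity
  have hlog : Real.log (1 + (μi / σ ^ 2) * N / (1 + b ^ 2 * s)) ≤
      (μi / σ ^ 2) * N / (1 + b ^ 2 * s) := by
    have := Real.log_le_sub_one_of_pos (by linarith :
      (0:ℝ) < 1 + (μi / σ ^ 2) * N / (1 + b ^ 2 * s))
    linarith
  linarith

private lemma zero_mem_Sset (a b σ P γ : ℝ) (hP : 0 ≤ P) (hγP : 0 ≤ γ * P) (n : ℕ) :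
    (0 : ℝ) ∈ Sset a b σ P γ n := by
  refine ⟨0, 0, fun i => le_refl 0, ?_, ?_, ?_⟩
  · simp; positivity
  · simp
    rw [mul_assoc]
    exact mul_nonneg (Nat.cast_nonneg n) hγP
  · simp

private lemma Sset_subset_Icc (a b σ P γ : ℝ) (hσ : 0 < σ) (hP : 0 < P) {n : ℕ}
    (hn : 1 ≤ n) : Sset a b σ P γ n ⊆ Set.Icc 0 ((1 + a ^ 2) * P / σ ^ 2) := by
  rintro x ⟨μ, l, hμ, hsum, -, hx⟩
  have hnpos : (0:ℝ) < n := by exact_mod_cast hn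
  constructor
  · rw [hx]
    apply mul_nonneg (by positivity)
    exact Finset.sum_nonneg fun i _ => term_nonneg a b σ hσ (hμ i) (l i)
  · rw [hx]
    have h1 : ∑ i, Real.log (1 + (μ i / σ ^ 2) * ‖1 + ((a * b : ℝ) : ℂ) * l i‖ ^ 2
        / (1 + b ^ 2 * ‖l i‖ ^ 2)) ≤ ∑ i, (2 + 2 * a ^ 2) / σ ^ 2 * μ i :=
      Finset.sum_le_sum fun i _ => term_bound a b σ hσ (hμ i) (l i)
    have h2 : ∑ i, (2 + 2 * a ^ 2) / σ ^ 2 * μ i = (2 + 2 * a ^ 2) / σ ^ 2 * ∑ i, μ i := by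
      rw [Finset.mul_sum]
    have h3 : (2 + 2 * a ^ 2) / σ ^ 2 * ∑ i, μ i ≤ (2 + 2 * a ^ 2) / σ ^ 2 * ((n : ℝ) * P) :=
      mul_le_mul_of_nonneg_left hsum (by positivity)
    have h4 : (1 / (2 * (n : ℝ))) * ∑ i, Real.log (1 + (μ i / σ ^ 2) *
        ‖1 + ((a * b : ℝ) : ℂ) * l i‖ ^ 2 / (1 + b ^ 2 * ‖l i‖ ^ 2)) ≤
        (1 / (2 * (n : ℝ))) * ((2 + 2 * a ^ 2) / σ ^ 2 * ((n : ℝ) * P)) := by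
      apply mul_le_mul_of_nonneg_left _ (by positivity)
      linarith
    refine h4.trans (le_of_eq ?_)
    field_simp

private lemma combine_mem (a b σ P γ : ℝ) {m n : ℕ} (hm : 1 ≤ m) (hn : 1 ≤ n)
    {x y : ℝ} (hx : x ∈ Sset a b σ P γ m) (hy : y ∈ Sset a b σ P γ n) :
    ((m : ℝ) * x + (n : ℝ) * y) / ((m : ℝ) + (n : ℝ)) ∈ Sset a b σ P γ (m + n) := by
  obtain ⟨μ₁, l₁, hμ₁, hs₁, hr₁, hx₁⟩ := hx
  obtain ⟨μ₂, l₂, hμ₂, hs₂, hr₂, hx₂⟩ := hy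
  have hmpos : (0:ℝ) < m := by exact_mod_cast hm
  have hnpos : (0:ℝ) < n := by exact_mod_cast hn
  refine ⟨Fin.append μ₁ μ₂, Fin.append l₁ l₂, ?_, ?_, ?_, ?_⟩
  · intro i
    rcases lt_or_ge (i : ℕ) m with h | h
    · have : i = Fin.castAdd n (i.castLT h) := by ext; simp
      rw [this, Fin.append_left]; exact hμ₁ _
    · obtain ⟨j, rfl⟩ : ∃ j : Fin n, i = Fin.natAdd m j := by
        refine ⟨⟨i - m, ?_⟩, ?_⟩
        · omega
        · ext; simp; omega
      rw [Fin.append_right]; exact hμ₂ _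
  · rw [Fin.sum_univ_add]
    simp only [Fin.append_left, Fin.append_right]
    push_cast
    linarith
  · rw [Fin.sum_univ_add]
    simp only [Fin.append_left, Fin.append_right]
    push_cast
    linarith
  · rw [Fin.sum_univ_add]
    simp only [Fin.append_left, Fin.append_right]
    have e1 : ∑ i, Real.log (1 + (μ₁ i / σ ^ 2) * ‖1 + ((a * b : ℝ) : ℂ) * l₁ i‖ ^ 2
        / (1 + b ^ 2 * ‖l₁ i‖ ^ 2)) = 2 * (m : ℝ) * x := by
      rw [hx₁]; field_simp
    have e2 : ∑ i, Real.log (1 + (μ₂ i / σ ^ 2) * ‖1 + ((a * b : ℝ) : ℂ) * l₂ i‖ ^ 2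
        / (1 + b ^ 2 * ‖l₂ i‖ ^ 2)) = 2 * (n : ℝ) * y := by
      rw [hx₂]; field_simp
    rw [e1, e2]
    push_cast
    field_simp

/-- The sequence `n·Fₙ` of scaled maximum LTI relaying rates is superadditive,
`Fₙ` is bounded above, and hence `Fₙ` converges to its supremum over `n ≥ 1`. -/
theorem lti_rate_superadditive_limit (a b σ P γ : ℝ) (hσ : 0 < σ) (hP : 0 < P)
    (hγ : 0 < γ) (F : ℕ → ℝ)
    (hF : ∀ n : ℕ, 0 < n → F n = sSup {x : ℝ | ∃ (μ : Fin n → ℝ) (l : Fin n → ℂ),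
      (∀ i, 0 ≤ μ i) ∧ (∑ i, μ i ≤ (n : ℝ) * P) ∧
      (∑ i, (a ^ 2 * μ i + σ ^ 2) * ‖l i‖ ^ 2 ≤ (n : ℝ) * γ * P) ∧
      x = (1 / (2 * (n : ℝ))) * ∑ i, Real.log
        (1 + (μ i / σ ^ 2) * ‖1 + ((a * b : ℝ) : ℂ) * l i‖ ^ 2
          / (1 + b ^ 2 * ‖l i‖ ^ 2))}) :
    (∀ m n : ℕ, 1 ≤ m → 1 ≤ n →
      (m : ℝ) * F m + (n : ℝ) * F n ≤ ((m + n : ℕ) : ℝ) * F (m + n)) ∧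
    (∃ B : ℝ, ∀ n : ℕ, 1 ≤ n → F n ≤ B) ∧
    Tendsto F atTop (nhds (sSup {x : ℝ | ∃ n : ℕ, 1 ≤ n ∧ x = F n})) := by
  set B : ℝ := (1 + a ^ 2) * P / σ ^ 2 with hB
  have hF' : ∀ n : ℕ, 0 < n → F n = sSup (Sset a b σ P γ n) := hF
  have hne : ∀ n : ℕ, (Sset a b σ P γ n).Nonempty :=
    fun n => ⟨0, zero_mem_Sset a b σ P γ hP.le (by positivity) n⟩
  have hbdd : ∀ n : ℕ, 1 ≤ n → BddAbove (Sset a b σ P γ n) := fun n hn =>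
    ⟨B, fun x hx => (Sset_subset_Icc a b σ P γ hσ hP hn hx).2⟩
  have hFB : ∀ n : ℕ, 1 ≤ n → F n ≤ B := by
    intro n hn
    rw [hF' n hn]
    exact csSup_le (hne n) fun x hx => (Sset_subset_Icc a b σ P γ hσ hP hn hx).2
  have hF0 : ∀ n : ℕ, 1 ≤ n → 0 ≤ F n := by
    intro n hn
    rw [hF' n hn]
    exact le_csSup (hbdd n hn) (zero_mem_Sset a b σ P γ hP.le (by positivity) n)
  have hsuper : ∀ m n : ℕ, 1 ≤ m → 1 ≤ n →
      (m : ℝ) * F m + (n : ℝ) * F n ≤ ((m + n : ℕ) : ℝ) * F (m + n) := by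
    intro m n hm hn
    have hmpos : (0:ℝ) < m := by exact_mod_cast hm
    have hnpos : (0:ℝ) < n := by exact_mod_cast hn
    have key : ∀ x ∈ Sset a b σ P γ m, ∀ y ∈ Sset a b σ P γ n,
        (m : ℝ) * x + (n : ℝ) * y ≤ ((m : ℝ) + (n : ℝ)) * F (m + n) := by
      intro x hx y hy
      have hmem := combine_mem a b σ P γ hm hn hx hy
      have hle : ((m : ℝ) * x + (n : ℝ) * y) / ((m : ℝ) + (n : ℝ)) ≤ F (m + n) := by
        rw [hF' (m + n) (by omega)]
        exact le_csSup (hbdd (m + n) (by omega)) hmem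
      calc (m : ℝ) * x + (n : ℝ) * y
          = ((m : ℝ) + (n : ℝ)) * (((m : ℝ) * x + (n : ℝ) * y) / ((m : ℝ) + (n : ℝ))) := by
            field_simp
        _ ≤ ((m : ℝ) + (n : ℝ)) * F (m + n) :=
            mul_le_mul_of_nonneg_left hle (by linarith)
    have step1 : ∀ x ∈ Sset a b σ P γ m,
        (m : ℝ) * x + (n : ℝ) * F n ≤ ((m : ℝ) + (n : ℝ)) * F (m + n) := by
      intro x hx
      have : F n ≤ (((m : ℝ) + (n : ℝ)) * F (m + n) - (m : ℝ) * x) / n := by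
        rw [hF' n hn]
        refine csSup_le (hne n) fun y hy => ?_
        rw [le_div_iff₀ hnpos]
        have := key x hx y hy
        linarith [mul_comm y (n : ℝ)]
      have := (le_div_iff₀ hnpos).1 this
      linarith [mul_comm (F n) (n : ℝ)]
    have : F m ≤ (((m : ℝ) + (n : ℝ)) * F (m + n) - (n : ℝ) * F n) / m := by
      rw [hF' m hm]
      refine csSup_le (hne m) fun x hx => ?_
      rw [le_div_iff₀ hmpos]
      have := step1 x hx
      linarith [mul_comm x (m : ℝ)]
    have := (le_div_iff₀ hmpos).1 this
    push_cast
    linarith [mul_comm (F m) (m : ℝ)]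
  refine ⟨hsuper, ⟨B, hFB⟩, ?_⟩
  -- Fekete's lemma on u n = -(n * F n)
  set u : ℕ → ℝ := fun n => -((n : ℝ) * F n) with hu
  have hsub : Subadditive u := by
    intro m n
    rcases Nat.eq_zero_or_pos m with rfl | hm
    · simp [hu]
    rcases Nat.eq_zero_or_pos n with rfl | hn
    · simp [hu]
    have := hsuper m n hm hn
    simp only [hu]
    push_cast at this ⊢
    linarith
  have hdiv : ∀ n : ℕ, 1 ≤ n → u n / n = -F n := by
    intro n hn
    have hnpos : (0:ℝ) < n := by exact_mod_cast hn
    field_simp [hu]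
    ring
  have hbb : BddBelow (Set.range fun n : ℕ => u n / n) := by
    refine ⟨-(max B 0), ?_⟩
    rintro x ⟨n, rfl⟩
    show -(max B 0) ≤ u n / (n : ℝ)
    rcases Nat.eq_zero_or_pos n with rfl | hn
    · simp [hu]
    · rw [hdiv n hn]
      have := hFB n hn
      have : F n ≤ max B 0 := le_trans this (le_max_left _ _)
      linarith
  have htend := hsub.tendsto_lim hbb
  have himg : (fun n : ℕ => u n / n) '' Set.Ici 1 =
      -{x : ℝ | ∃ n : ℕ, 1 ≤ n ∧ x = F n} := by
    ext y
    simp only [Set.mem_image, Set.mem_Ici, Set.mem_neg, Set.mem_setOf_eq]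
    constructor
    · rintro ⟨n, hn, rfl⟩
      exact ⟨n, hn, by rw [hdiv n hn]; ring⟩
    · rintro ⟨n, hn, hy⟩
      exact ⟨n, hn, by rw [hdiv n hn]; linarith⟩
  have hlim : hsub.lim = -sSup {x : ℝ | ∃ n : ℕ, 1 ≤ n ∧ x = F n} := by
    rw [Subadditive.lim, himg, Real.sInf_def, neg_neg]
  have : Tendsto (fun n : ℕ => -(u n / n)) atTop
      (nhds (sSup {x : ℝ | ∃ n : ℕ, 1 ≤ n ∧ x = F n})) := by
    have := htend.neg
    rwa [hlim, neg_neg] at this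
  refine this.congr' ?_
  filter_upwards [eventually_ge_atTop 1] with n hn
  rw [hdiv n hn, neg_neg]
end

section
/- Fix real numbers a, b with ab ≠ 0 and σ > 0, P > 0, γ > 0. For every positive integer n, the maximization of (1/2n) Σ_{i=1}^n log(1 + (μ_i/σ²)·|1+abλ_i|²/(1+b²|λ_i|²)) over μ ∈ ℝⁿ, λ ∈ ℂⁿ subject to μ_i ≥ 0 for all i, Σ_{i=1}^n μ_i ≤ nP, and Σ_{i=1}^n (a²μ_i + σ²)|λ_i|² ≤ nγP admits a maximizer (μ*, λ*) such that the set of values {λ*_1, …, λ*_n} has at most 50 elements, at most 49 of which are nonzero, and such that μ*_i = μ*_j whenever λ*_i = λ*_j. -/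
set_option maxHeartbeats 8000000

open Polynomial

/-- Elimination identity: the two stationarity equations force `r` to be a root of an
explicit degree-11 polynomial whose coefficients don't depend on the bin. -/
lemma lti_elim (s A B c ν η r m : ℝ)
    (hA : m*(1+c*r)*(c-B*r) = ν*(A*m+s)*r*((s*(1+B*r^2)+m*(1+c*r)^2))*(1+B*r^2))
    (hB : (1+c*r)^2 = (η+ν*A*r^2)*(s*(1+B*r^2)+m*(1+c*r)^2)) :
    (1*η*c + -1*η^2*s*c)
    + (-1*ν*A + 5*η*c^2 + -1*η*B + -1*η*ν*s + 1*η*ν*s*A + -3*η^2*s*c^2 + 1*η^2*s*B)*r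
    + (-5*ν*A*c + 10*η*c^3 + -5*η*B*c + -6*η*ν*s*c + 2*η*ν*s*A*c + -3*η^2*s*c^3 + 2*η^2*s*B*c)*r^2
    + (-10*ν*A*c^2 + -2*ν*A*B + -1*ν^2*s*A + 1*ν^2*s*A^2 + 10*η*c^4 + -10*η*B*c^2 + -15*η*ν*s*c^2 + -1*η*ν*s*B + 4*η*ν*s*A*B + -1*η^2*s*c^4 + 1*η^2*s*B^2)*r^3
    + (-10*ν*A*c^3 + -11*ν*A*B*c + -6*ν^2*s*A*c + 3*ν^2*s*A^2*c + 5*η*c^5 + -10*η*B*c^3 + -20*η*ν*s*c^3 + -6*η*ν*s*B*c + -2*η*ν*s*A*c^3 + 12*η*ν*s*A*B*c + -2*η^2*s*B*c^3 + 3*η^2*s*B^2*c)*r^4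
    + (-5*ν*A*c^4 + -25*ν*A*B*c^2 + -15*ν^2*s*A*c^2 + -1*ν^2*s*A*B + 3*ν^2*s*A^2*c^2 + 3*ν^2*s*A^2*B + 1*η*c^6 + -5*η*B*c^4 + -15*η*ν*s*c^4 + -15*η*ν*s*B*c^2 + -1*η*ν*s*A*c^4 + 12*η*ν*s*A*B*c^2 + 3*η*ν*s*A*B^2 + -1*η^2*s*B*c^4 + 3*η^2*s*B^2*c^2)*r^5
    + (-1*ν*A*c^5 + -30*ν*A*B*c^3 + -20*ν^2*s*A*c^3 + -6*ν^2*s*A*B*c + 1*ν^2*s*A^2*c^3 + 10*ν^2*s*A^2*B*c + -1*η*B*c^5 + -6*η*ν*s*c^5 + -20*η*ν*s*B*c^3 + 4*η*ν*s*A*B*c^3 + 10*η*ν*s*A*B^2*c + 1*η^2*s*B^2*c^3)*r^6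
    + (-20*ν*A*B*c^4 + -15*ν^2*s*A*c^4 + -15*ν^2*s*A*B*c^2 + 12*ν^2*s*A^2*B*c^2 + 2*ν^2*s*A^2*B^2 + -1*η*ν*s*c^6 + -15*η*ν*s*B*c^4 + 12*η*ν*s*A*B^2*c^2)*r^7
    + (-7*ν*A*B*c^5 + -6*ν^2*s*A*c^5 + -20*ν^2*s*A*B*c^3 + 6*ν^2*s*A^2*B*c^3 + 7*ν^2*s*A^2*B^2*c + -6*η*ν*s*B*c^5 + 6*η*ν*s*A*B^2*c^3)*r^8
    + (-1*ν*A*B*c^6 + -1*ν^2*s*A*c^6 + -15*ν^2*s*A*B*c^4 + 1*ν^2*s*A^2*B*c^4 + 9*ν^2*s*A^2*B^2*c^2 + -1*η*ν*s*B*c^6 + 1*η*ν*s*A*B^2*c^4)*r^9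
    + (-6*ν^2*s*A*B*c^5 + 5*ν^2*s*A^2*B^2*c^3)*r^10
    + (-1*ν^2*s*A*B*c^6 + 1*ν^2*s*A^2*B^2*c^4)*r^11 = 0 := by
  linear_combination
    (((η+ν*A*r^2)*(1+c*r)^2)^2) * hA
    + ((-(ν*r*(1+B*r^2)*A*(1+c*r)^2))*(((1+c*r)^2 - (η+ν*A*r^2)*s*(1+B*r^2)) + m*((η+ν*A*r^2)*(1+c*r)^2))
       + ((1+c*r)*(c-B*r) - ν*r*(1+B*r^2)*(A*s*(1+B*r^2)+s*(1+c*r)^2))*((η+ν*A*r^2)*(1+c*r)^2)) * hB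
set_option maxHeartbeats 1600000

open Polynomial

/-- Root-count: the stationarity equations confine `r` to at most 11 values. -/
lemma lti_roots (s A B c ν η : ℝ) (hs : 0 < s) (hA : 0 < A) (hB : 0 < B)
    (hc : 0 < c) (hc2 : c^2 = A*B) (hν : 0 < ν) :
    ∃ F : Finset ℝ, F.card ≤ 11 ∧ ∀ r m : ℝ,
      (m*(1+c*r)*(c-B*r) = ν*(A*m+s)*r*((s*(1+B*r^2)+m*(1+c*r)^2))*(1+B*r^2)) →
      ((1+c*r)^2 = (η+ν*A*r^2)*(s*(1+B*r^2)+m*(1+c*r)^2)) →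
      r ∈ F := by
  set e0 : ℝ := (1*η*c + -1*η^2*s*c) with he0
  set e1 : ℝ := (-1*ν*A + 5*η*c^2 + -1*η*B + -1*η*ν*s + 1*η*ν*s*A + -3*η^2*s*c^2 + 1*η^2*s*B) with he1
  set e2 : ℝ := (-5*ν*A*c + 10*η*c^3 + -5*η*B*c + -6*η*ν*s*c + 2*η*ν*s*A*c + -3*η^2*s*c^3 + 2*η^2*s*B*c) with he2
  set e3 : ℝ := (-10*ν*A*c^2 + -2*ν*A*B + -1*ν^2*s*A + 1*ν^2*s*A^2 + 10*η*c^4 + -10*η*B*c^2 + -15*η*ν*s*c^2 + -1*η*ν*s*B + 4*η*ν*s*A*B + -1*η^2*s*c^4 + 1*η^2*s*B^2) with he3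
  set e4 : ℝ := (-10*ν*A*c^3 + -11*ν*A*B*c + -6*ν^2*s*A*c + 3*ν^2*s*A^2*c + 5*η*c^5 + -10*η*B*c^3 + -20*η*ν*s*c^3 + -6*η*ν*s*B*c + -2*η*ν*s*A*c^3 + 12*η*ν*s*A*B*c + -2*η^2*s*B*c^3 + 3*η^2*s*B^2*c) with he4
  set e5 : ℝ := (-5*ν*A*c^4 + -25*ν*A*B*c^2 + -15*ν^2*s*A*c^2 + -1*ν^2*s*A*B + 3*ν^2*s*A^2*c^2 + 3*ν^2*s*A^2*B + 1*η*c^6 + -5*η*B*c^4 + -15*η*ν*s*c^4 + -15*η*ν*s*B*c^2 + -1*η*ν*s*A*c^4 + 12*η*ν*s*A*B*c^2 + 3*η*ν*s*A*B^2 + -1*η^2*s*B*c^4 + 3*η^2*s*B^2*c^2) with he5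
  set e6 : ℝ := (-1*ν*A*c^5 + -30*ν*A*B*c^3 + -20*ν^2*s*A*c^3 + -6*ν^2*s*A*B*c + 1*ν^2*s*A^2*c^3 + 10*ν^2*s*A^2*B*c + -1*η*B*c^5 + -6*η*ν*s*c^5 + -20*η*ν*s*B*c^3 + 4*η*ν*s*A*B*c^3 + 10*η*ν*s*A*B^2*c + 1*η^2*s*B^2*c^3) with he6
  set e7 : ℝ := (-20*ν*A*B*c^4 + -15*ν^2*s*A*c^4 + -15*ν^2*s*A*B*c^2 + 12*ν^2*s*A^2*B*c^2 + 2*ν^2*s*A^2*B^2 + -1*η*ν*s*c^6 + -15*η*ν*s*B*c^4 + 12*η*ν*s*A*B^2*c^2) with he7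
  set e8 : ℝ := (-7*ν*A*B*c^5 + -6*ν^2*s*A*c^5 + -20*ν^2*s*A*B*c^3 + 6*ν^2*s*A^2*B*c^3 + 7*ν^2*s*A^2*B^2*c + -6*η*ν*s*B*c^5 + 6*η*ν*s*A*B^2*c^3) with he8
  set e9 : ℝ := (-1*ν*A*B*c^6 + -1*ν^2*s*A*c^6 + -15*ν^2*s*A*B*c^4 + 1*ν^2*s*A^2*B*c^4 + 9*ν^2*s*A^2*B^2*c^2 + -1*η*ν*s*B*c^6 + 1*η*ν*s*A*B^2*c^4) with he9
  set e10 : ℝ := (-6*ν^2*s*A*B*c^5 + 5*ν^2*s*A^2*B^2*c^3) with he10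
  set e11 : ℝ := (-1*ν^2*s*A*B*c^6 + 1*ν^2*s*A^2*B^2*c^4) with he11
  set p : ℝ[X] := C e0 + C e1 * X + C e2 * X^2 + C e3 * X^3 + C e4 * X^4 + C e5 * X^5
      + C e6 * X^6 + C e7 * X^7 + C e8 * X^8 + C e9 * X^9 + C e10 * X^10 + C e11 * X^11 with hp
  have he10ne : e10 ≠ 0 := by
    have h10 : e10 = -(ν^2*s*A^2*B^2*c^3) := by
      rw [he10]; linear_combination (-6*ν^2*s*A*B*c^3) * hc2
    rw [h10]
    exact neg_ne_zero.mpr (by positivity)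
  have hpne : p ≠ 0 := by
    intro h
    apply he10ne
    have := congrArg (fun q => Polynomial.coeff q 10) h
    simpa [hp, coeff_add, coeff_C_mul, coeff_X_pow, coeff_C] using this
  have hdeg : p.natDegree ≤ 11 := by
    rw [hp]; compute_degree
  refine ⟨p.roots.toFinset, ?_, ?_⟩
  · calc p.roots.toFinset.card ≤ Multiset.card p.roots := p.roots.toFinset_card_le
      _ ≤ p.natDegree := p.card_roots'
      _ ≤ 11 := hdeg
  · intro r m h1 h2
    have hroot : p.eval r = 0 := by
      have := lti_elim s A B c ν η r m h1 h2
      simp only [hp, eval_add, eval_mul, eval_pow, eval_C, eval_X]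
      rw [← he0, ← he1, ← he2, ← he3, ← he4, ← he5, ← he6, ← he7, ← he8, ← he9, ← he10, ← he11] at this
      linarith [this]
    simp only [Multiset.mem_toFinset, mem_roots, hpne, IsRoot.def, hroot, ne_eq,
      not_false_eq_true, and_self]

/-- Derivative of the bin rate along the relay-power transfer curve
`t ↦ sqrt (r^2 + κ t)` (source power `m` fixed). -/
lemma lti_hasDerivAt_q (s B c m r κ : ℝ) (hs : 0 < s) (hB : 0 ≤ B) (hc : 0 ≤ c)
    (hm : 0 ≤ m) (hr : 0 < r) :
    HasDerivAt (fun t : ℝ => Real.log (s*(1+B*(r^2+κ*t)) + m*(1+c*Real.sqrt (r^2+κ*t))^2)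
        - Real.log (s*(1+B*(r^2+κ*t))))
      (κ * (m*(1+c*r)*(c-B*r)) / (r*((s*(1+B*r^2)+m*(1+c*r)^2))*(1+B*r^2))) 0 := by
  have hr2 : (r:ℝ)^2 + κ*0 = r^2 := by ring
  have hu : HasDerivAt (fun t : ℝ => r^2 + κ*t) κ 0 := by
    simpa using ((hasDerivAt_id (0:ℝ)).const_mul κ).const_add (r^2)
  have hsqrt0 : Real.sqrt (r^2 + κ*0) = r := by rw [hr2, Real.sqrt_sq hr.le]
  have hsq : HasDerivAt (fun t : ℝ => Real.sqrt (r^2+κ*t)) (κ/(2*r)) 0 := by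
    have h0 : (r^2 + κ*0) ≠ 0 := by rw [hr2]; positivity
    have := (Real.hasDerivAt_sqrt h0).comp 0 hu
    refine this.congr_deriv ?_
    rw [hsqrt0]; ring
  have hD : HasDerivAt (fun t : ℝ => s*(1+B*(r^2+κ*t))) (s*(B*κ)) 0 :=
    ((hu.const_mul B).const_add 1).const_mul s
  have hw : HasDerivAt (fun t : ℝ => (1+c*Real.sqrt (r^2+κ*t))^2)
      (2*(1+c*r)*(c*(κ/(2*r)))) 0 := by
    have := ((hsq.const_mul c).const_add 1).pow 2
    refine this.congr_deriv ?_
    rw [hsqrt0]; ring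
  have hN : HasDerivAt (fun t : ℝ => s*(1+B*(r^2+κ*t)) + m*(1+c*Real.sqrt (r^2+κ*t))^2)
      (s*(B*κ) + m*(2*(1+c*r)*(c*(κ/(2*r))))) 0 := hD.add (hw.const_mul m)
  have hS : 0 < s*(1+B*r^2)+m*(1+c*r)^2 := by positivity
  have hDpos : 0 < s*(1+B*r^2) := by positivity
  have hN0 : (s*(1+B*(r^2+κ*0)) + m*(1+c*Real.sqrt (r^2+κ*0))^2) = s*(1+B*r^2)+m*(1+c*r)^2 := by
    rw [hsqrt0, hr2]
  have hD0 : (s*(1+B*(r^2+κ*0))) = s*(1+B*r^2) := by rw [hr2]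
  have hlogN := hN.log (by rw [hN0]; exact ne_of_gt hS)
  have hlogD := hD.log (by rw [hD0]; exact ne_of_gt hDpos)
  have := hlogN.sub hlogD
  refine this.congr_deriv ?_
  rw [hN0, hD0]
  have h1 : (1:ℝ)+B*r^2 > 0 := by positivity
  field_simp
  ring

/-- Derivative of the bin rate along the source-power transfer curve
(relay power `q = (A m + s) r²` held fixed). -/
lemma lti_hasDerivAt_m (s A B c m r : ℝ) (hs : 0 < s) (hA : 0 ≤ A) (hB : 0 ≤ B)
    (hc : 0 ≤ c) (hm : 0 ≤ m) (hr : 0 < r) :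
    HasDerivAt (fun t : ℝ =>
        Real.log (s*(1+B*((A*m+s)*r^2/(A*(m+t)+s)))
          + (m+t)*(1+c*Real.sqrt ((A*m+s)*r^2/(A*(m+t)+s)))^2)
        - Real.log (s*(1+B*((A*m+s)*r^2/(A*(m+t)+s)))))
      ((1+c*r)^2/((s*(1+B*r^2)+m*(1+c*r)^2))
        - A*r*(m*(1+c*r)*(c-B*r))/(((s*(1+B*r^2)+m*(1+c*r)^2))*(1+B*r^2)*(A*m+s))) 0 := by
  have hden0 : 0 < A*m+s := by positivity
  have hden00 : A*(m+0)+s = A*m+s := by ring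
  have hdenD : HasDerivAt (fun t : ℝ => A*(m+t)+s) A 0 := by
    simpa using (((hasDerivAt_id (0:ℝ)).const_add m).const_mul A).add_const s
  have hwD : HasDerivAt (fun t : ℝ => (A*m+s)*r^2/(A*(m+t)+s))
      ((0*(A*(m+0)+s) - (A*m+s)*r^2*A)/(A*(m+0)+s)^2) 0 :=
    (hasDerivAt_const 0 ((A*m+s)*r^2)).div hdenD (by rw [hden00]; exact ne_of_gt hden0)
  have hw0 : (A*m+s)*r^2/(A*(m+0)+s) = r^2 := by
    rw [hden00]; field_simp
  have hsqrt0 : Real.sqrt ((A*m+s)*r^2/(A*(m+0)+s)) = r := by rw [hw0, Real.sqrt_sq hr.le]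
  set w' : ℝ := (0*(A*(m+0)+s) - (A*m+s)*r^2*A)/(A*(m+0)+s)^2 with hw'
  have hw'eq : w' = -(A*r^2)/(A*m+s) := by
    rw [hw', hden00]; field_simp; ring
  have hsq : HasDerivAt (fun t : ℝ => Real.sqrt ((A*m+s)*r^2/(A*(m+t)+s))) (w'/(2*r)) 0 := by
    have h0 : (A*m+s)*r^2/(A*(m+0)+s) ≠ 0 := by rw [hw0]; positivity
    have := (Real.hasDerivAt_sqrt h0).comp 0 hwD
    refine this.congr_deriv ?_
    rw [hsqrt0]; ring
  have hD : HasDerivAt (fun t : ℝ => s*(1+B*((A*m+s)*r^2/(A*(m+t)+s)))) (s*(B*w')) 0 :=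
    ((hwD.const_mul B).const_add 1).const_mul s
  have hsqterm : HasDerivAt (fun t : ℝ => (1+c*Real.sqrt ((A*m+s)*r^2/(A*(m+t)+s)))^2)
      (2*(1+c*r)*(c*(w'/(2*r)))) 0 := by
    have := ((hsq.const_mul c).const_add 1).pow 2
    refine this.congr_deriv ?_
    rw [hsqrt0]; ring
  have hMt : HasDerivAt (fun t : ℝ => m+t) 1 0 := by
    simpa using (hasDerivAt_id (0:ℝ)).const_add m
  have hN : HasDerivAt (fun t : ℝ => s*(1+B*((A*m+s)*r^2/(A*(m+t)+s)))
      + (m+t)*(1+c*Real.sqrt ((A*m+s)*r^2/(A*(m+t)+s)))^2)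
      (s*(B*w') + (1*(1+c*Real.sqrt ((A*m+s)*r^2/(A*(m+0)+s)))^2
        + (m+0)*(2*(1+c*r)*(c*(w'/(2*r)))))) 0 :=
    hD.add (hMt.mul hsqterm)
  have hS : 0 < s*(1+B*r^2)+m*(1+c*r)^2 := by positivity
  have hDpos : 0 < s*(1+B*r^2) := by positivity
  have hN0 : (s*(1+B*((A*m+s)*r^2/(A*(m+0)+s)))
      + (m+0)*(1+c*Real.sqrt ((A*m+s)*r^2/(A*(m+0)+s)))^2) = s*(1+B*r^2)+m*(1+c*r)^2 := by
    rw [hsqrt0, hw0]; ring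
  have hD0 : (s*(1+B*((A*m+s)*r^2/(A*(m+0)+s)))) = s*(1+B*r^2) := by rw [hw0]
  have hlogN := hN.log (by rw [hN0]; exact ne_of_gt hS)
  have hlogD := hD.log (by rw [hD0]; exact ne_of_gt hDpos)
  have := hlogN.sub hlogD
  refine this.congr_deriv ?_
  rw [hN0, hD0, hsqrt0, hw'eq]
  have h1 : (1:ℝ)+B*r^2 > 0 := by positivity
  field_simp
  ring

section
variable {n : ℕ}

/-- Difference of sums of functions agreeing off a pair. -/
lemma lti_sum_pair_diff (F G : Fin n → ℝ) (i j : Fin n) (hij : i ≠ j)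
    (h : ∀ k, k ≠ i → k ≠ j → F k = G k) :
    ∑ k, F k - ∑ k, G k = (F i - G i) + (F j - G j) := by
  have h1 : ∑ k, (F k - G k) = ∑ k ∈ ({i, j} : Finset (Fin n)), (F k - G k) := by
    refine (Finset.sum_subset (Finset.subset_univ _) ?_).symm
    intro k _ hk
    simp only [Finset.mem_insert, Finset.mem_singleton, not_or] at hk
    rw [h k hk.1 hk.2]; ring
  rw [Finset.sum_sub_distrib] at h1
  rw [Finset.sum_pair hij] at h1
  linarith

end

/-- Core structural lemma at the real (aligned-phase) level: any maximizer whose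
relay gains are nonnegative, capped, and vanish on silent bins has its interior
gains among at most 11 values. -/
lemma lti_core (s A B c P γ : ℝ) (n : ℕ) (hs : 0 < s) (hA : 0 < A) (hB : 0 < B)
    (hc : 0 < c) (hc2 : c^2 = A*B)
    (μ r : Fin n → ℝ)
    (hμ0 : ∀ i, 0 ≤ μ i) (hr0 : ∀ i, 0 ≤ r i)
    (hopt : ∀ (μ' r' : Fin n → ℝ), (∀ i, 0 ≤ μ' i) → (∀ i, 0 ≤ r' i) →
      (∑ i, μ' i ≤ n*P) → (∑ i, (A*μ' i+s)*(r' i)^2 ≤ n*γ*P) →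
      ∑ i, (Real.log (s*(1+B*(r' i)^2) + μ' i*(1+c*(r' i))^2)
              - Real.log (s*(1+B*(r' i)^2)))
      ≤ ∑ i, (Real.log (s*(1+B*(r i)^2) + μ i*(1+c*(r i))^2)
              - Real.log (s*(1+B*(r i)^2))))
    (hfeasμ : ∑ i, μ i ≤ n*P) (hfeasr : ∑ i, (A*μ i+s)*(r i)^2 ≤ n*γ*P)
    (hzero : ∀ i, μ i = 0 → r i = 0) :
    ∃ F : Finset ℝ, F.card ≤ 11 ∧ ∀ i, 0 < r i → r i < c/B → r i ∈ F := by
  by_cases hex : ∃ i, 0 < r i ∧ r i < c/B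
  case neg =>
    exact ⟨∅, by simp, fun i h1 h2 => absurd ⟨h1, h2⟩ (not_exists.mp hex i)⟩
  case pos =>
  obtain ⟨i0, hi0r, hi0ρ⟩ := hex
  -- basic facts about an interior bin
  have hint : ∀ i, 0 < r i → 0 < μ i := by
    intro i hi
    rcases eq_or_lt_of_le (hμ0 i) with h | h
    · exact absurd (hzero i h.symm) (by linarith)
    · exact h
  have hμi0 : 0 < μ i0 := hint i0 hi0r
  have hcB : ∀ i, r i < c/B → 0 < c - B * r i := by
    intro i hi
    nlinarith [(lt_div_iff₀ hB).mp hi]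
  have hSpos : ∀ i, 0 < s*(1+B*(r i)^2) + μ i*(1+c*(r i))^2 := by
    intro i
    have := hμ0 i; have := hr0 i
    positivity
  have hBrpos : ∀ i, (0:ℝ) < 1+B*(r i)^2 := by intro i; positivity
  have hAμpos : ∀ i, (0:ℝ) < A*μ i+s := by
    intro i; have := hμ0 i; positivity
  have h1cr : ∀ i, (0:ℝ) < 1+c*(r i) := by
    intro i; have := hr0 i; positivity
  set ν : ℝ := μ i0*(1+c*(r i0))*(c-B*(r i0))
      / ((A*μ i0+s)*(r i0)*(s*(1+B*(r i0)^2) + μ i0*(1+c*(r i0))^2)*(1+B*(r i0)^2)) with hν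
  have hνpos : 0 < ν := by
    rw [hν]
    have h1 := hcB i0 hi0ρ
    have h2 := hSpos i0
    have h3 := hBrpos i0
    have h4 := hAμpos i0
    have h5 := h1cr i0
    positivity
  -- equation A at every interior bin, from relay-power transfers
  have eqA : ∀ i, 0 < r i → r i < c/B →
      μ i*(1+c*(r i))*(c-B*(r i))
        = ν*(A*μ i+s)*(r i)*((s*(1+B*(r i)^2)+μ i*(1+c*(r i))^2))*(1+B*(r i)^2) := by
    intro i h1 h2
    by_cases hii : i = i0
    · subst hii
      rw [hν]
      have d1 := hAμpos i; have d2 := hSpos i; have d3 := hBrpos i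
      field_simp
    · have hμi : 0 < μ i := hint i h1
      set κ1 : ℝ := (A*μ i+s)⁻¹ with hκ1
      set κ0 : ℝ := (A*μ i0+s)⁻¹ with hκ0
      have hκ1pos : 0 < κ1 := inv_pos.mpr (hAμpos i)
      have hκ0pos : 0 < κ0 := inv_pos.mpr (hAμpos i0)
      have hd1 := lti_hasDerivAt_q s B c (μ i) (r i) κ1 hs hB.le hc.le (hμ0 i) h1
      have hd0 := lti_hasDerivAt_q s B c (μ i0) (r i0) (-κ0) hs hB.le hc.le (hμ0 i0) hi0r
      have hg := hd1.add hd0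
      have hloc : IsLocalMax (fun t : ℝ =>
          (Real.log (s*(1+B*((r i)^2+κ1*t)) + μ i*(1+c*Real.sqrt ((r i)^2+κ1*t))^2)
            - Real.log (s*(1+B*((r i)^2+κ1*t))))
          + (Real.log (s*(1+B*((r i0)^2+(-κ0)*t)) + μ i0*(1+c*Real.sqrt ((r i0)^2+(-κ0)*t))^2)
            - Real.log (s*(1+B*((r i0)^2+(-κ0)*t))))) 0 := by
        have hεpos : 0 < min ((r i)^2/κ1) ((r i0)^2/κ0) :=
          lt_min (div_pos (pow_pos h1 2) hκ1pos) (div_pos (pow_pos hi0r 2) hκ0pos)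
        refine Metric.eventually_nhds_iff.mpr ⟨min ((r i)^2/κ1) ((r i0)^2/κ0), hεpos, ?_⟩
        intro t ht
        rw [Real.dist_eq, sub_zero] at ht
        have hti : |t| * κ1 < (r i)^2 :=
          (lt_div_iff₀ hκ1pos).mp (lt_of_lt_of_le ht (min_le_left _ _))
        have hti0 : |t| * κ0 < (r i0)^2 :=
          (lt_div_iff₀ hκ0pos).mp (lt_of_lt_of_le ht (min_le_right _ _))
        have harg1 : 0 ≤ (r i)^2 + κ1*t := by
          nlinarith [neg_abs_le t, abs_nonneg t]
        have harg0 : 0 ≤ (r i0)^2 + (-κ0)*t := by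
          nlinarith [le_abs_self t, abs_nonneg t]
        set r' : Fin n → ℝ := Function.update (Function.update r i
            (Real.sqrt ((r i)^2+κ1*t))) i0 (Real.sqrt ((r i0)^2+(-κ0)*t)) with hr'
        have hr'i : r' i = Real.sqrt ((r i)^2+κ1*t) := by
          rw [hr', Function.update_of_ne hii, Function.update_self]
        have hr'i0 : r' i0 = Real.sqrt ((r i0)^2+(-κ0)*t) := by
          rw [hr', Function.update_self]
        have hr'k : ∀ k, k ≠ i → k ≠ i0 → r' k = r k := by
          intro k hki hki0
          rw [hr', Function.update_of_ne hki0, Function.update_of_ne hki]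
        have hr'0 : ∀ k, 0 ≤ r' k := by
          intro k
          by_cases hk0 : k = i0
          · subst hk0; rw [hr'i0]; exact Real.sqrt_nonneg _
          by_cases hki : k = i
          · subst hki; rw [hr'i]; exact Real.sqrt_nonneg _
          · rw [hr'k k hki hk0]; exact hr0 k
        have hsq1 : (r' i)^2 = (r i)^2 + κ1*t := by rw [hr'i, Real.sq_sqrt harg1]
        have hsq0 : (r' i0)^2 = (r i0)^2 + (-κ0)*t := by rw [hr'i0, Real.sq_sqrt harg0]
        have hrelay : ∑ k, (A*μ k+s)*(r' k)^2 = ∑ k, (A*μ k+s)*(r k)^2 := by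
          have hd := lti_sum_pair_diff (fun k => (A*μ k+s)*(r' k)^2)
            (fun k => (A*μ k+s)*(r k)^2) i i0 hii
            (fun k hki hki0 => by simp only [hr'k k hki hki0])
          have e1 : (A*μ i+s)*(r' i)^2 - (A*μ i+s)*(r i)^2 = t := by
            rw [hsq1, hκ1]
            field_simp
            ring
          have e0 : (A*μ i0+s)*(r' i0)^2 - (A*μ i0+s)*(r i0)^2 = -t := by
            rw [hsq0, hκ0]
            field_simp
            ring
          linarith
        have hobj := hopt μ r' hμ0 hr'0 hfeasμ (by rw [hrelay]; exact hfeasr)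
        have hkey := lti_sum_pair_diff
          (fun k => Real.log (s*(1+B*(r' k)^2) + μ k*(1+c*(r' k))^2)
            - Real.log (s*(1+B*(r' k)^2)))
          (fun k => Real.log (s*(1+B*(r k)^2) + μ k*(1+c*(r k))^2)
            - Real.log (s*(1+B*(r k)^2)))
          i i0 hii (fun k hki hki0 => by simp only [hr'k k hki hki0])
        have hgt : (Real.log (s*(1+B*((r i)^2+κ1*t)) + μ i*(1+c*Real.sqrt ((r i)^2+κ1*t))^2)
            - Real.log (s*(1+B*((r i)^2+κ1*t))))
          + (Real.log (s*(1+B*((r i0)^2+(-κ0)*t)) + μ i0*(1+c*Real.sqrt ((r i0)^2+(-κ0)*t))^2)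
            - Real.log (s*(1+B*((r i0)^2+(-κ0)*t))))
          = (Real.log (s*(1+B*(r' i)^2) + μ i*(1+c*(r' i))^2) - Real.log (s*(1+B*(r' i)^2)))
          + (Real.log (s*(1+B*(r' i0)^2) + μ i0*(1+c*(r' i0))^2)
              - Real.log (s*(1+B*(r' i0)^2))) := by
          rw [← hr'i, ← hr'i0, ← hsq1, ← hsq0]
        have hg0 : (Real.log (s*(1+B*((r i)^2+κ1*0)) + μ i*(1+c*Real.sqrt ((r i)^2+κ1*0))^2)
            - Real.log (s*(1+B*((r i)^2+κ1*0))))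
          + (Real.log (s*(1+B*((r i0)^2+(-κ0)*0)) + μ i0*(1+c*Real.sqrt ((r i0)^2+(-κ0)*0))^2)
            - Real.log (s*(1+B*((r i0)^2+(-κ0)*0))))
          = (Real.log (s*(1+B*(r i)^2) + μ i*(1+c*(r i))^2) - Real.log (s*(1+B*(r i)^2)))
          + (Real.log (s*(1+B*(r i0)^2) + μ i0*(1+c*(r i0))^2)
              - Real.log (s*(1+B*(r i0)^2))) := by
          have z1 : (r i)^2 + κ1*0 = (r i)^2 := by ring
          have z0 : (r i0)^2 + (-κ0)*0 = (r i0)^2 := by ring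
          rw [z1, z0, Real.sqrt_sq (hr0 i), Real.sqrt_sq (hr0 i0)]
        simp only []
        rw [hgt, hg0]
        linarith
      have hder := hloc.hasDerivAt_eq_zero hg
      rw [hν]
      have d1 := hAμpos i; have d2 := hSpos i; have d3 := hBrpos i
      have d4 := hAμpos i0; have d5 := hSpos i0; have d6 := hBrpos i0
      have hri : r i ≠ 0 := ne_of_gt h1
      have hri0 : r i0 ≠ 0 := ne_of_gt hi0r
      rw [hκ1, hκ0] at hder
      field_simp at hder ⊢
      linarith [hder]
  -- equation B at every interior bin, from source-power transfers
  set η : ℝ := (1+c*(r i0))^2/(s*(1+B*(r i0)^2) + μ i0*(1+c*(r i0))^2) - ν*A*(r i0)^2 with hη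
  have eqB : ∀ i, 0 < r i → r i < c/B →
      (1+c*(r i))^2 = (η+ν*A*(r i)^2)*(s*(1+B*(r i)^2)+μ i*(1+c*(r i))^2) := by
    intro i h1 h2
    by_cases hii : i = i0
    · subst hii
      rw [hη]
      have d2 := hSpos i
      field_simp
      ring
    · have hμi : 0 < μ i := hint i h1
      have hd1 := lti_hasDerivAt_m s A B c (μ i) (r i) hs hA.le hB.le hc.le (hμ0 i) h1
      have hd0pre := lti_hasDerivAt_m s A B c (μ i0) (r i0) hs hA.le hB.le hc.le (hμ0 i0) hi0r
      have hd0at : HasDerivAt (fun u : ℝ =>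
          Real.log (s*(1+B*((A*μ i0+s)*(r i0)^2/(A*(μ i0+u)+s)))
            + (μ i0+u)*(1+c*Real.sqrt ((A*μ i0+s)*(r i0)^2/(A*(μ i0+u)+s)))^2)
          - Real.log (s*(1+B*((A*μ i0+s)*(r i0)^2/(A*(μ i0+u)+s)))))
          ((1+c*(r i0))^2/((s*(1+B*(r i0)^2)+μ i0*(1+c*(r i0))^2))
            - A*(r i0)*(μ i0*(1+c*(r i0))*(c-B*(r i0)))
              /(((s*(1+B*(r i0)^2)+μ i0*(1+c*(r i0))^2))*(1+B*(r i0)^2)*(A*μ i0+s)))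
          ((fun t : ℝ => -t) 0) := by simpa using hd0pre
      have hneg : HasDerivAt (fun t : ℝ => -t) (-1 : ℝ) 0 := by
        exact (hasDerivAt_id (0:ℝ)).neg
      have hd0 := hd0at.comp 0 hneg
      simp only [Function.comp_def] at hd0
      have hg := hd1.add hd0
      have hloc : IsLocalMax (fun t : ℝ =>
          (Real.log (s*(1+B*((A*μ i+s)*(r i)^2/(A*(μ i+t)+s)))
            + (μ i+t)*(1+c*Real.sqrt ((A*μ i+s)*(r i)^2/(A*(μ i+t)+s)))^2)
          - Real.log (s*(1+B*((A*μ i+s)*(r i)^2/(A*(μ i+t)+s)))))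
          + (Real.log (s*(1+B*((A*μ i0+s)*(r i0)^2/(A*(μ i0+ -t)+s)))
            + (μ i0+ -t)*(1+c*Real.sqrt ((A*μ i0+s)*(r i0)^2/(A*(μ i0+ -t)+s)))^2)
          - Real.log (s*(1+B*((A*μ i0+s)*(r i0)^2/(A*(μ i0+ -t)+s)))))) 0 := by
        refine Metric.eventually_nhds_iff.mpr ⟨min (μ i) (μ i0), lt_min hμi hμi0, ?_⟩
        intro t ht
        rw [Real.dist_eq, sub_zero] at ht
        have hti : |t| < μ i := lt_of_lt_of_le ht (min_le_left _ _)
        have hti0 : |t| < μ i0 := lt_of_lt_of_le ht (min_le_right _ _)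
        have hm1 : 0 ≤ μ i + t := by
          have := neg_abs_le t; linarith
        have hm0 : 0 ≤ μ i0 + -t := by
          have := le_abs_self t; linarith
        have hd1pos : 0 < A*(μ i+t)+s := by positivity
        have hd0pos : 0 < A*(μ i0+ -t)+s := by positivity
        have harg1 : 0 ≤ (A*μ i+s)*(r i)^2/(A*(μ i+t)+s) := by
          have := hAμpos i; positivity
        have harg0 : 0 ≤ (A*μ i0+s)*(r i0)^2/(A*(μ i0+ -t)+s) := by
          have := hAμpos i0; positivity
        set μ' : Fin n → ℝ := Function.update (Function.update μ i (μ i+t)) i0 (μ i0+ -t)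
          with hμ'
        set r' : Fin n → ℝ := Function.update (Function.update r i
            (Real.sqrt ((A*μ i+s)*(r i)^2/(A*(μ i+t)+s)))) i0
            (Real.sqrt ((A*μ i0+s)*(r i0)^2/(A*(μ i0+ -t)+s))) with hr'
        have hμ'i : μ' i = μ i+t := by
          rw [hμ', Function.update_of_ne hii, Function.update_self]
        have hμ'i0 : μ' i0 = μ i0+ -t := by rw [hμ', Function.update_self]
        have hμ'k : ∀ k, k ≠ i → k ≠ i0 → μ' k = μ k := by
          intro k hki hki0
          rw [hμ', Function.update_of_ne hki0, Function.update_of_ne hki]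
        have hr'i : r' i = Real.sqrt ((A*μ i+s)*(r i)^2/(A*(μ i+t)+s)) := by
          rw [hr', Function.update_of_ne hii, Function.update_self]
        have hr'i0 : r' i0 = Real.sqrt ((A*μ i0+s)*(r i0)^2/(A*(μ i0+ -t)+s)) := by
          rw [hr', Function.update_self]
        have hr'k : ∀ k, k ≠ i → k ≠ i0 → r' k = r k := by
          intro k hki hki0
          rw [hr', Function.update_of_ne hki0, Function.update_of_ne hki]
        have hμ'0 : ∀ k, 0 ≤ μ' k := by
          intro k
          by_cases hk0 : k = i0
          · subst hk0; rw [hμ'i0]; exact hm0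
          by_cases hki : k = i
          · subst hki; rw [hμ'i]; exact hm1
          · rw [hμ'k k hki hk0]; exact hμ0 k
        have hr'0 : ∀ k, 0 ≤ r' k := by
          intro k
          by_cases hk0 : k = i0
          · subst hk0; rw [hr'i0]; exact Real.sqrt_nonneg _
          by_cases hki : k = i
          · subst hki; rw [hr'i]; exact Real.sqrt_nonneg _
          · rw [hr'k k hki hk0]; exact hr0 k
        have hsq1 : (r' i)^2 = (A*μ i+s)*(r i)^2/(A*(μ i+t)+s) := by
          rw [hr'i, Real.sq_sqrt harg1]
        have hsq0 : (r' i0)^2 = (A*μ i0+s)*(r i0)^2/(A*(μ i0+ -t)+s) := by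
          rw [hr'i0, Real.sq_sqrt harg0]
        have hsumμ : ∑ k, μ' k = ∑ k, μ k := by
          have hd := lti_sum_pair_diff μ' μ i i0 hii (fun k hki hki0 => hμ'k k hki hki0)
          rw [hμ'i, hμ'i0] at hd
          linarith
        have hrelay : ∑ k, (A*μ' k+s)*(r' k)^2 = ∑ k, (A*μ k+s)*(r k)^2 := by
          have hd := lti_sum_pair_diff (fun k => (A*μ' k+s)*(r' k)^2)
            (fun k => (A*μ k+s)*(r k)^2) i i0 hii
            (fun k hki hki0 => by simp only [hμ'k k hki hki0, hr'k k hki hki0])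
          have e1 : (A*μ' i+s)*(r' i)^2 - (A*μ i+s)*(r i)^2 = 0 := by
            rw [hsq1, hμ'i]
            field_simp
            ring
          have e0 : (A*μ' i0+s)*(r' i0)^2 - (A*μ i0+s)*(r i0)^2 = 0 := by
            rw [hsq0, hμ'i0]
            field_simp
            ring
          linarith
        have hobj := hopt μ' r' hμ'0 hr'0 (by rw [hsumμ]; exact hfeasμ)
          (by rw [hrelay]; exact hfeasr)
        have hkey := lti_sum_pair_diff
          (fun k => Real.log (s*(1+B*(r' k)^2) + μ' k*(1+c*(r' k))^2)
            - Real.log (s*(1+B*(r' k)^2)))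
          (fun k => Real.log (s*(1+B*(r k)^2) + μ k*(1+c*(r k))^2)
            - Real.log (s*(1+B*(r k)^2)))
          i i0 hii (fun k hki hki0 => by simp only [hμ'k k hki hki0, hr'k k hki hki0])
        have hgt : (Real.log (s*(1+B*((A*μ i+s)*(r i)^2/(A*(μ i+t)+s)))
            + (μ i+t)*(1+c*Real.sqrt ((A*μ i+s)*(r i)^2/(A*(μ i+t)+s)))^2)
          - Real.log (s*(1+B*((A*μ i+s)*(r i)^2/(A*(μ i+t)+s)))))
          + (Real.log (s*(1+B*((A*μ i0+s)*(r i0)^2/(A*(μ i0+ -t)+s)))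
            + (μ i0+ -t)*(1+c*Real.sqrt ((A*μ i0+s)*(r i0)^2/(A*(μ i0+ -t)+s)))^2)
          - Real.log (s*(1+B*((A*μ i0+s)*(r i0)^2/(A*(μ i0+ -t)+s)))))
          = (Real.log (s*(1+B*(r' i)^2) + μ' i*(1+c*(r' i))^2) - Real.log (s*(1+B*(r' i)^2)))
          + (Real.log (s*(1+B*(r' i0)^2) + μ' i0*(1+c*(r' i0))^2)
              - Real.log (s*(1+B*(r' i0)^2))) := by
          rw [← hr'i, ← hr'i0, ← hsq1, ← hsq0, ← hμ'i, ← hμ'i0]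
        have hg0 : (Real.log (s*(1+B*((A*μ i+s)*(r i)^2/(A*(μ i+0)+s)))
            + (μ i+0)*(1+c*Real.sqrt ((A*μ i+s)*(r i)^2/(A*(μ i+0)+s)))^2)
          - Real.log (s*(1+B*((A*μ i+s)*(r i)^2/(A*(μ i+0)+s)))))
          + (Real.log (s*(1+B*((A*μ i0+s)*(r i0)^2/(A*(μ i0+ -0)+s)))
            + (μ i0+ -0)*(1+c*Real.sqrt ((A*μ i0+s)*(r i0)^2/(A*(μ i0+ -0)+s)))^2)
          - Real.log (s*(1+B*((A*μ i0+s)*(r i0)^2/(A*(μ i0+ -0)+s)))))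
          = (Real.log (s*(1+B*(r i)^2) + μ i*(1+c*(r i))^2) - Real.log (s*(1+B*(r i)^2)))
          + (Real.log (s*(1+B*(r i0)^2) + μ i0*(1+c*(r i0))^2)
              - Real.log (s*(1+B*(r i0)^2))) := by
          have z1 : μ i + 0 = μ i := by ring
          have z0 : μ i0 + -0 = μ i0 := by ring
          rw [z1, z0]
          have w1 : (A*μ i+s)*(r i)^2/(A*μ i+s) = (r i)^2 := by
            field_simp
          have w0 : (A*μ i0+s)*(r i0)^2/(A*μ i0+s) = (r i0)^2 := by
            field_simp
          rw [w1, w0, Real.sqrt_sq (hr0 i), Real.sqrt_sq (hr0 i0)]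
        simp only []
        rw [hgt, hg0]
        linarith
      have hder := hloc.hasDerivAt_eq_zero hg
      have hAi := eqA i h1 h2
      have hAi0 := eqA i0 hi0r hi0ρ
      have d1 := hAμpos i; have d2 := hSpos i; have d3 := hBrpos i
      have d4 := hAμpos i0; have d5 := hSpos i0; have d6 := hBrpos i0
      have hri : r i ≠ 0 := ne_of_gt h1
      have hri0 : r i0 ≠ 0 := ne_of_gt hi0r
      have hWi : A*(r i)*(μ i*(1+c*(r i))*(c-B*(r i)))
          /(((s*(1+B*(r i)^2)+μ i*(1+c*(r i))^2))*(1+B*(r i)^2)*(A*μ i+s))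
          = ν*A*(r i)^2 := by
        rw [hAi]
        field_simp
      have hWi0 : A*(r i0)*(μ i0*(1+c*(r i0))*(c-B*(r i0)))
          /(((s*(1+B*(r i0)^2)+μ i0*(1+c*(r i0))^2))*(1+B*(r i0)^2)*(A*μ i0+s))
          = ν*A*(r i0)^2 := by
        rw [hAi0]
        field_simp
      rw [hWi, hWi0] at hder
      rw [hη] at *
      have hfin : (1+c*(r i))^2/((s*(1+B*(r i)^2)+μ i*(1+c*(r i))^2)) - ν*A*(r i)^2
          = (1+c*(r i0))^2/((s*(1+B*(r i0)^2)+μ i0*(1+c*(r i0))^2)) - ν*A*(r i0)^2 := by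
        linarith
      field_simp at hfin ⊢
      linarith
  obtain ⟨F, hFcard, hF⟩ := lti_roots s A B c ν η hs hA hB hc hc2 hνpos
  exact ⟨F, hFcard, fun i h1 h2 => hF (r i) (μ i) (eqA i h1 h2) (eqB i h1 h2)⟩

/-- Fiberwise averaging preserves weighted sums when the weight only depends on the fiber. -/
lemma lti_avg_sum {n : ℕ} (r μ0 w : Fin n → ℝ)
    (hw : ∀ i j, r i = r j → w i = w j) :
    ∑ i, (∑ j ∈ Finset.univ.filter (fun j => r j = r i), μ0 j)
        / ((Finset.univ.filter (fun j => r j = r i)).card : ℝ) * w i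
    = ∑ i, μ0 i * w i := by
  classical
  rw [← Finset.sum_fiberwise_of_maps_to
      (g := r) (t := Finset.univ.image r)
      (fun i _ => Finset.mem_image_of_mem r (Finset.mem_univ i)) (fun i => μ0 i * w i),
    ← Finset.sum_fiberwise_of_maps_to
      (g := r) (t := Finset.univ.image r)
      (fun i _ => Finset.mem_image_of_mem r (Finset.mem_univ i))
      (fun i => (∑ j ∈ Finset.univ.filter (fun j => r j = r i), μ0 j)
        / ((Finset.univ.filter (fun j => r j = r i)).card : ℝ) * w i)]
  refine Finset.sum_congr rfl (fun v hv => ?_)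
  obtain ⟨i1, -, hi1⟩ := Finset.mem_image.mp hv
  have hfibeq : ∀ i ∈ Finset.univ.filter (fun j => r j = v),
      Finset.univ.filter (fun j => r j = r i) = Finset.univ.filter (fun j => r j = v) := by
    intro i hi
    have : r i = v := (Finset.mem_filter.mp hi).2
    rw [this]
  have hcard : ((Finset.univ.filter (fun j => r j = v)).card : ℝ) ≠ 0 := by
    have : i1 ∈ Finset.univ.filter (fun j => r j = v) := by
      simp [hi1]
    have hpos := Finset.card_pos.mpr ⟨i1, this⟩
    exact_mod_cast hpos.ne'
  have hwconst : ∀ i ∈ Finset.univ.filter (fun j => r j = v), w i = w i1 := by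
    intro i hi
    exact hw i i1 (by rw [(Finset.mem_filter.mp hi).2, hi1])
  calc ∑ i ∈ Finset.univ.filter (fun j => r j = v),
        (∑ j ∈ Finset.univ.filter (fun j => r j = r i), μ0 j)
          / ((Finset.univ.filter (fun j => r j = r i)).card : ℝ) * w i
      = ∑ i ∈ Finset.univ.filter (fun j => r j = v),
        (∑ j ∈ Finset.univ.filter (fun j => r j = v), μ0 j)
          / ((Finset.univ.filter (fun j => r j = v)).card : ℝ) * w i1 := by
        refine Finset.sum_congr rfl (fun i hi => ?_)
        rw [hfibeq i hi, hwconst i hi]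
    _ = ((Finset.univ.filter (fun j => r j = v)).card : ℝ) *
        ((∑ j ∈ Finset.univ.filter (fun j => r j = v), μ0 j)
          / ((Finset.univ.filter (fun j => r j = v)).card : ℝ) * w i1) := by
        rw [Finset.sum_const, nsmul_eq_mul]
    _ = (∑ j ∈ Finset.univ.filter (fun j => r j = v), μ0 j) * w i1 := by
        field_simp
    _ = ∑ i ∈ Finset.univ.filter (fun j => r j = v), μ0 i * w i := by
        rw [Finset.sum_mul]
        exact Finset.sum_congr rfl (fun i hi => by rw [hwconst i hi])

/-- The complex objective evaluated at an aligned real gain equals the log-ratio form. -/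
lemma lti_Tform (a b σ : ℝ) (hab : a*b ≠ 0) (hσ : 0 < σ) (m x : ℝ)
    (hm : 0 ≤ m) (hx : 0 ≤ x) :
    Real.log (1 + (m / σ^2) * ‖1+((a*b : ℝ):ℂ)*((((if 0 < a*b then (1:ℝ) else -1)*x : ℝ)):ℂ)‖^2
        / (1+b^2*‖((((if 0 < a*b then (1:ℝ) else -1)*x : ℝ)):ℂ)‖^2))
    = Real.log (σ^2*(1+b^2*x^2) + m*(1+|a*b| * x)^2) - Real.log (σ^2*(1+b^2*x^2)) := by
  have hb : b ≠ 0 := fun h => hab (by rw [h, mul_zero])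
  have key1 : ((a*b : ℝ):ℂ)*((((if 0 < a*b then (1:ℝ) else -1)*x : ℝ)):ℂ)
      = ((|a*b| * x : ℝ) : ℂ) := by
    rw [show ((a*b : ℝ):ℂ)*((((if 0 < a*b then (1:ℝ) else -1)*x : ℝ)):ℂ)
        = ((((a*b)*((if 0 < a*b then (1:ℝ) else -1)*x)) : ℝ) : ℂ) by push_cast; ring]
    congr 1
    by_cases h : 0 < a*b
    · rw [if_pos h, abs_of_pos h]; ring
    · rw [if_neg h, abs_of_neg (lt_of_le_of_ne (not_lt.mp h) hab)]; ring
  have key2 : ‖(1:ℂ)+((|a*b| * x : ℝ) : ℂ)‖ = 1+|a*b| * x := by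
    rw [show (1:ℂ)+((|a*b| * x : ℝ) : ℂ) = (((1+|a*b| * x : ℝ)) : ℂ) by push_cast; ring]
    rw [Complex.norm_real, Real.norm_eq_abs]
    exact abs_of_nonneg (by positivity)
  have key3 : ‖((((if 0 < a*b then (1:ℝ) else -1)*x : ℝ)):ℂ)‖ = x := by
    rw [Complex.norm_real, Real.norm_eq_abs, abs_mul]
    by_cases h : 0 < a*b
    · rw [if_pos h]; simp [abs_of_nonneg hx]
    · rw [if_neg h]; simp [abs_of_nonneg hx]
  rw [key1, key2, key3]
  have hD : (0:ℝ) < σ^2*(1+b^2*x^2) := by positivity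
  have hN : (0:ℝ) < σ^2*(1+b^2*x^2) + m*(1+|a*b| * x)^2 := by positivity
  have harg : 1 + (m / σ^2) * (1+|a*b| * x)^2 / (1+b^2*x^2)
      = (σ^2*(1+b^2*x^2) + m*(1+|a*b| * x)^2) / (σ^2*(1+b^2*x^2)) := by
    field_simp
    try ring
  rw [harg, Real.log_div hN.ne' hD.ne']

/-- Phase alignment and capping can only improve the per-bin rate. -/
lemma lti_alignbound (a b σ : ℝ) (hab : a*b ≠ 0) (hσ : 0 < σ) (m : ℝ) (hm : 0 ≤ m)
    (x : ℂ) :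
    Real.log (1 + (m / σ^2) * ‖1+((a*b : ℝ):ℂ)*x‖^2 / (1+b^2*‖x‖^2))
    ≤ Real.log (σ^2*(1+b^2*(min (|a*b|/b^2) ‖x‖)^2)
          + m*(1+|a*b| * (min (|a*b|/b^2) ‖x‖))^2)
      - Real.log (σ^2*(1+b^2*(min (|a*b|/b^2) ‖x‖)^2)) := by
  have hb : b ≠ 0 := fun h => hab (by rw [h, mul_zero])
  have hb2 : (0:ℝ) < b^2 := by positivity
  have habs : (0:ℝ) < |a*b| := abs_pos.mpr hab
  set R := ‖x‖ with hR
  have hR0 : 0 ≤ R := norm_nonneg x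
  set u := min (|a*b|/b^2) R with hu
  have hu0 : 0 ≤ u := le_min (by positivity) hR0
  -- step 1: numerator bound
  have hX : ‖1+((a*b : ℝ):ℂ)*x‖ ≤ 1+|a*b| * R := by
    calc ‖1+((a*b : ℝ):ℂ)*x‖ ≤ ‖(1:ℂ)‖ + ‖((a*b : ℝ):ℂ)*x‖ := norm_add_le _ _
      _ = 1 + |a*b| * R := by
          rw [norm_one, norm_mul, Complex.norm_real, Real.norm_eq_abs]
  have hX2 : ‖1+((a*b : ℝ):ℂ)*x‖^2 ≤ (1+|a*b| * R)^2 := by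
    have h0 : (0:ℝ) ≤ ‖1+((a*b : ℝ):ℂ)*x‖ := norm_nonneg _
    nlinarith
  -- step 2: ratio bound
  have hratio : (1+|a*b| * R)^2/(1+b^2*R^2) ≤ (1+|a*b| * u)^2/(1+b^2*u^2) := by
    rcases le_or_gt R (|a*b|/b^2) with h | h
    · have : u = R := min_eq_right h
      rw [this]
    · have huρ : u = |a*b|/b^2 := min_eq_left h.le
      rw [div_le_div_iff₀ (by positivity) (by positivity), huρ]
      set q := |a*b|/b^2 with hqdef
      have hq : |a*b| = b^2*q := by rw [hqdef]; field_simp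
      rw [hq]
      have hfac : (0:ℝ) ≤ (1+b^2*q^2) * (b^2*(R-q)^2) := by positivity
      nlinarith [hfac]
  -- step 3: chain
  have hargle : 1 + (m / σ^2) * ‖1+((a*b : ℝ):ℂ)*x‖^2 / (1+b^2*R^2)
      ≤ 1 + (m / σ^2) * ((1+|a*b| * u)^2/(1+b^2*u^2)) := by
    have hms : 0 ≤ m/σ^2 := by positivity
    have hY : (0:ℝ) < 1+b^2*R^2 := by positivity
    have c1 : ‖1+((a*b : ℝ):ℂ)*x‖^2 / (1+b^2*R^2) ≤ (1+|a*b| * R)^2/(1+b^2*R^2) := by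
      gcongr
    have c2 : ‖1+((a*b : ℝ):ℂ)*x‖^2 / (1+b^2*R^2) ≤ (1+|a*b| * u)^2/(1+b^2*u^2) :=
      le_trans c1 hratio
    rw [mul_div_assoc]
    have := mul_le_mul_of_nonneg_left c2 hms
    linarith
  have hpos1 : (0:ℝ) < 1 + (m / σ^2) * ‖1+((a*b : ℝ):ℂ)*x‖^2 / (1+b^2*R^2) := by
    have : 0 ≤ (m / σ^2) * ‖1+((a*b : ℝ):ℂ)*x‖^2 / (1+b^2*R^2) := by positivity
    linarith
  have hlog1 : Real.log (1 + (m / σ^2) * ‖1+((a*b : ℝ):ℂ)*x‖^2 / (1+b^2*R^2))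
      ≤ Real.log (1 + (m / σ^2) * ((1+|a*b| * u)^2/(1+b^2*u^2))) :=
    Real.log_le_log hpos1 hargle
  have hD : (0:ℝ) < σ^2*(1+b^2*u^2) := by positivity
  have hN : (0:ℝ) < σ^2*(1+b^2*u^2) + m*(1+|a*b| * u)^2 := by positivity
  have harg : 1 + (m / σ^2) * ((1+|a*b| * u)^2/(1+b^2*u^2))
      = (σ^2*(1+b^2*u^2) + m*(1+|a*b| * u)^2) / (σ^2*(1+b^2*u^2)) := by
    field_simp
    try ring
  rw [harg, Real.log_div hN.ne' hD.ne'] at hlog1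
  exact hlog1

/-- Tangent-line bound for the concave per-bin rate in the source power. -/
lemma lti_tangent (D X m mb : ℝ) (hD : 0 < D) (hX : 0 ≤ X) (hm : 0 ≤ m) (hmb : 0 ≤ mb) :
    Real.log (D + m*X) - Real.log (D + mb*X) ≤ (m - mb)*X/(D + mb*X) := by
  have h1 : (0:ℝ) < D + m*X := by positivity
  have h2 : (0:ℝ) < D + mb*X := by positivity
  have h3 := Real.log_le_sub_one_of_pos (div_pos h1 h2)
  rw [Real.log_div h1.ne' h2.ne'] at h3
  have h4 : (D + m*X)/(D + mb*X) - 1 = (m - mb)*X/(D + mb*X) := by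
    field_simp
    ring
  linarith [h3, h4.ge, h4.le]



/-- Structural reduction for complex LTI relaying over `n` frequency bins: the
rate maximization admits a maximizer whose relay gains take at most 50 distinct
values, at most 49 of them nonzero, with equal source power in bins sharing the
same gain. -/
theorem lti_maximizer_fifty_modes (a b : ℝ) (hab : a * b ≠ 0) (σ P γ : ℝ)
    (hσ : 0 < σ) (hP : 0 < P) (hγ : 0 < γ) (n : ℕ) (hn : 0 < n) :
    ∃ (μ : Fin n → ℝ) (l : Fin n → ℂ),
      (∀ i, 0 ≤ μ i) ∧ (∑ i, μ i ≤ (n : ℝ) * P) ∧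
      (∑ i, (a ^ 2 * μ i + σ ^ 2) * ‖l i‖ ^ 2 ≤ (n : ℝ) * γ * P) ∧
      (∀ (μ' : Fin n → ℝ) (l' : Fin n → ℂ), (∀ i, 0 ≤ μ' i) →
        (∑ i, μ' i ≤ (n : ℝ) * P) →
        (∑ i, (a ^ 2 * μ' i + σ ^ 2) * ‖l' i‖ ^ 2 ≤ (n : ℝ) * γ * P) →
        (1 / (2 * (n : ℝ))) * ∑ i, Real.log
            (1 + (μ' i / σ ^ 2) * ‖1 + ((a * b : ℝ) : ℂ) * l' i‖ ^ 2
              / (1 + b ^ 2 * ‖l' i‖ ^ 2))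
          ≤ (1 / (2 * (n : ℝ))) * ∑ i, Real.log
            (1 + (μ i / σ ^ 2) * ‖1 + ((a * b : ℝ) : ℂ) * l i‖ ^ 2
              / (1 + b ^ 2 * ‖l i‖ ^ 2))) ∧
      (Finset.image l Finset.univ).card ≤ 50 ∧
      ((Finset.image l Finset.univ).filter (· ≠ 0)).card ≤ 49 ∧
      (∀ i j, l i = l j → μ i = μ j) := by
  classical
  have hb : b ≠ 0 := fun h => hab (by rw [h, mul_zero])
  have ha : a ≠ 0 := fun h => hab (by rw [h, zero_mul])
  have habs : (0:ℝ) < |a*b| := abs_pos.mpr hab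
  have hs : (0:ℝ) < σ^2 := by positivity
  have hA : (0:ℝ) < a^2 := by positivity
  have hB : (0:ℝ) < b^2 := by positivity
  have hc2 : |a*b|^2 = a^2*b^2 := by rw [sq_abs]; ring
  have hnpos : (0:ℝ) < (n:ℝ) := Nat.cast_pos.mpr hn
  set sg : ℝ := if 0 < a*b then (1:ℝ) else -1 with hsg
  have hsgne : sg ≠ 0 := by
    rw [hsg]; split <;> norm_num
  have hnormsg : ∀ x : ℝ, 0 ≤ x → ‖((sg*x : ℝ):ℂ)‖ = x := by
    intro x hx
    rw [Complex.norm_real, Real.norm_eq_abs, abs_mul, hsg]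
    by_cases h : 0 < a*b
    · rw [if_pos h]; simp [abs_of_nonneg hx]
    · rw [if_neg h]; simp [abs_of_nonneg hx]
  -- the feasible set and objective
  set K : Set ((Fin n → ℝ) × (Fin n → ℂ)) := {p | (∀ i, 0 ≤ p.1 i) ∧
      (∑ i, p.1 i ≤ (n:ℝ)*P) ∧ (∑ i, (a^2*p.1 i+σ^2)*‖p.2 i‖^2 ≤ (n:ℝ)*γ*P)} with hK
  set Fobj : ((Fin n → ℝ) × (Fin n → ℂ)) → ℝ := fun p => ∑ i, Real.log
      (1 + (p.1 i / σ^2) * ‖1+((a*b : ℝ):ℂ)*p.2 i‖^2 / (1+b^2*‖p.2 i‖^2)) with hFobj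
  -- existence of a maximizer
  have hKcl : IsClosed K := by
    have h1 : IsClosed {p : (Fin n → ℝ) × (Fin n → ℂ) | ∀ i, 0 ≤ p.1 i} := by
      have he : {p : (Fin n → ℝ) × (Fin n → ℂ) | ∀ i, 0 ≤ p.1 i}
          = ⋂ i, {p : (Fin n → ℝ) × (Fin n → ℂ) | 0 ≤ p.1 i} := by
        ext p; simp [Set.mem_iInter]
      rw [he]
      exact isClosed_iInter (fun i => isClosed_le continuous_const
        ((continuous_apply i).comp continuous_fst))
    have h2 : IsClosed {p : (Fin n → ℝ) × (Fin n → ℂ) | ∑ i, p.1 i ≤ (n:ℝ)*P} :=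
      isClosed_le (continuous_finset_sum _
        (fun i _ => (continuous_apply i).comp continuous_fst)) continuous_const
    have h3 : IsClosed {p : (Fin n → ℝ) × (Fin n → ℂ) |
        ∑ i, (a^2*p.1 i+σ^2)*‖p.2 i‖^2 ≤ (n:ℝ)*γ*P} :=
      isClosed_le (continuous_finset_sum _ (fun i _ =>
        ((continuous_const.mul ((continuous_apply i).comp continuous_fst)).add
          continuous_const).mul
          ((((continuous_apply i).comp continuous_snd).norm).pow 2))) continuous_const
    exact h1.inter (h2.inter h3)
  have hKbd : Bornology.IsBounded K := by
    refine (Metric.isBounded_closedBall (x := (0 : (Fin n → ℝ) × (Fin n → ℂ)))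
      (r := max ((n:ℝ)*P) (Real.sqrt ((n:ℝ)*γ*P/σ^2)))).subset ?_
    intro p hp
    obtain ⟨hp1, hp2, hp3⟩ := hp
    have hnP0 : (0:ℝ) ≤ (n:ℝ)*P := by positivity
    rw [Metric.mem_closedBall, dist_zero_right, Prod.norm_def]
    apply max_le
    · rw [pi_norm_le_iff_of_nonneg (le_max_of_le_left hnP0)]
      intro i
      rw [Real.norm_eq_abs, abs_of_nonneg (hp1 i)]
      refine le_max_of_le_left ?_
      calc p.1 i ≤ ∑ j, p.1 j := Finset.single_le_sum (fun j _ => hp1 j) (Finset.mem_univ i)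
        _ ≤ (n:ℝ)*P := hp2
    · rw [pi_norm_le_iff_of_nonneg (le_max_of_le_left hnP0)]
      intro i
      refine le_max_of_le_right ?_
      have hterm : σ^2*‖p.2 i‖^2 ≤ (n:ℝ)*γ*P := by
        have h1 : σ^2*‖p.2 i‖^2 ≤ (a^2*p.1 i+σ^2)*‖p.2 i‖^2 := by
          nlinarith [mul_nonneg (mul_nonneg (sq_nonneg a) (hp1 i)) (sq_nonneg ‖p.2 i‖)]
        have h2 : (a^2*p.1 i+σ^2)*‖p.2 i‖^2 ≤ ∑ j, (a^2*p.1 j+σ^2)*‖p.2 j‖^2 :=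
          Finset.single_le_sum (f := fun j => (a^2*p.1 j+σ^2)*‖p.2 j‖^2)
            (fun j _ => mul_nonneg
              (by nlinarith [mul_nonneg (sq_nonneg a) (hp1 j), hs]) (by positivity))
            (Finset.mem_univ i)
        linarith
      rw [Real.le_sqrt (norm_nonneg _)]
      rw [le_div_iff₀ hs]
      linarith
      positivity
  have hKcp : IsCompact K := Metric.isCompact_of_isClosed_isBounded hKcl hKbd
  have hKne : K.Nonempty := by
    refine ⟨⟨fun _ => 0, fun _ => 0⟩, fun i => le_refl 0, ?_, ?_⟩
    · simp only [Finset.sum_const_zero]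
      positivity
    · simp only [norm_zero]
      norm_num
      positivity
  have hcont : ContinuousOn Fobj K := by
    apply continuousOn_finset_sum
    intro i _
    apply ContinuousOn.log
    · apply Continuous.continuousOn
      have h2 : Continuous fun p : (Fin n → ℝ) × (Fin n → ℂ) => p.2 i :=
        (continuous_apply i).comp continuous_snd
      have h1 : Continuous fun p : (Fin n → ℝ) × (Fin n → ℂ) => p.1 i :=
        (continuous_apply i).comp continuous_fst
      have hden : Continuous fun p : (Fin n → ℝ) × (Fin n → ℂ) => 1 + b^2*‖p.2 i‖^2 :=
        continuous_const.add (continuous_const.mul (h2.norm.pow 2))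
      have hnum : Continuous fun p : (Fin n → ℝ) × (Fin n → ℂ) =>
          (p.1 i / σ^2) * ‖1+((a*b : ℝ):ℂ)*p.2 i‖^2 :=
        (h1.div_const _).mul ((continuous_const.add (continuous_const.mul h2)).norm.pow 2)
      exact continuous_const.add (hnum.div hden (fun p => by positivity))
    · intro p hp
      have h0 : 0 ≤ p.1 i / σ^2 := div_nonneg (hp.1 i) hs.le
      have hXx : (0:ℝ) ≤ ‖1+((a*b : ℝ):ℂ)*p.2 i‖^2 := by positivity
      have hYx : (0:ℝ) < 1+b^2*‖p.2 i‖^2 := by positivity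
      have hnn : 0 ≤ (p.1 i / σ^2) * ‖1+((a*b : ℝ):ℂ)*p.2 i‖^2 / (1+b^2*‖p.2 i‖^2) :=
        div_nonneg (mul_nonneg h0 hXx) hYx.le
      refine ne_of_gt ?_
      linarith
  obtain ⟨p0, hp0K, hp0max⟩ := hKcp.exists_isMaxOn hKne hcont
  obtain ⟨hp0nn, hp0P, hp0γ⟩ := hp0K
  -- normalization to aligned capped real gains
  set μ0 : Fin n → ℝ := p0.1 with hμ0def
  set l0 : Fin n → ℂ := p0.2 with hl0def
  set r : Fin n → ℝ := fun i => if μ0 i = 0 then 0 else min (|a*b|/b^2) ‖l0 i‖ with hrdef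
  have hri : ∀ i, r i = if μ0 i = 0 then 0 else min (|a*b|/b^2) ‖l0 i‖ := fun i => rfl
  have hr0 : ∀ i, 0 ≤ r i := by
    intro i
    rw [hri]
    split
    · exact le_refl 0
    · exact le_min (by positivity) (norm_nonneg _)
  have hrρ : ∀ i, r i ≤ |a*b|/b^2 := by
    intro i
    rw [hri]
    split
    · positivity
    · exact min_le_left _ _
  have hrl0 : ∀ i, r i ≤ ‖l0 i‖ := by
    intro i
    rw [hri]
    split
    · exact norm_nonneg _
    · exact min_le_right _ _
  have hzero : ∀ i, μ0 i = 0 → r i = 0 := by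
    intro i h
    rw [hri, if_pos h]
  -- per-bin alignment bound
  have hbin : ∀ (m : ℝ), 0 ≤ m → ∀ x : ℂ,
      Real.log (1 + (m / σ^2) * ‖1+((a*b : ℝ):ℂ)*x‖^2 / (1+b^2*‖x‖^2))
      ≤ Real.log (σ^2*(1+b^2*((if m = 0 then 0 else min (|a*b|/b^2) ‖x‖))^2)
          + m*(1+|a*b| * ((if m = 0 then 0 else min (|a*b|/b^2) ‖x‖)))^2)
        - Real.log (σ^2*(1+b^2*((if m = 0 then 0 else min (|a*b|/b^2) ‖x‖))^2)) := by
    intro m hm x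
    by_cases hm0 : m = 0
    · subst hm0
      simp
    · rw [if_neg hm0]
      exact lti_alignbound a b σ hab hσ m hm x
  -- real feasibility and optimality for the reduced problem
  have hfeasμ : ∑ i, μ0 i ≤ (n:ℝ)*P := hp0P
  have hfeasr : ∑ i, (a^2*μ0 i+σ^2)*(r i)^2 ≤ (n:ℝ)*γ*P := by
    refine le_trans (Finset.sum_le_sum (fun i _ => ?_)) hp0γ
    have h1 : (r i)^2 ≤ ‖l0 i‖^2 := pow_le_pow_left₀ (hr0 i) (hrl0 i) 2
    have h2 : 0 ≤ a^2*μ0 i+σ^2 := by nlinarith [hp0nn i]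
    nlinarith
  -- objective at any aligned real point equals the reduced objective
  have hTform : ∀ (m x : ℝ), 0 ≤ m → 0 ≤ x →
      Real.log (1 + (m / σ^2) * ‖1+((a*b : ℝ):ℂ)*((sg*x : ℝ):ℂ)‖^2
          / (1+b^2*‖((sg*x : ℝ):ℂ)‖^2))
      = Real.log (σ^2*(1+b^2*x^2) + m*(1+|a*b| * x)^2) - Real.log (σ^2*(1+b^2*x^2)) := by
    intro m x hm hx
    rw [hsg]
    exact lti_Tform a b σ hab hσ m x hm hx
  -- the reduced-problem optimality hypothesis
  have hTmax : ∀ (μ' r' : Fin n → ℝ), (∀ i, 0 ≤ μ' i) → (∀ i, 0 ≤ r' i) →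
      (∑ i, μ' i ≤ (n:ℝ)*P) → (∑ i, (a^2*μ' i+σ^2)*(r' i)^2 ≤ (n:ℝ)*γ*P) →
      ∑ i, (Real.log (σ^2*(1+b^2*(r' i)^2) + μ' i*(1+|a*b| * (r' i))^2)
              - Real.log (σ^2*(1+b^2*(r' i)^2)))
      ≤ ∑ i, (Real.log (σ^2*(1+b^2*(r i)^2) + μ0 i*(1+|a*b| * (r i))^2)
              - Real.log (σ^2*(1+b^2*(r i)^2))) := by
    intro μ' r' h1 h2 h3 h4
    have hmem : (⟨μ', fun i => ((sg*r' i : ℝ):ℂ)⟩ :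
        (Fin n → ℝ) × (Fin n → ℂ)) ∈ K := by
      refine ⟨h1, h3, ?_⟩
      refine le_trans (le_of_eq (Finset.sum_congr rfl (fun i _ => ?_))) h4
      rw [hnormsg (r' i) (h2 i)]
    have hchain1 : ∑ i, (Real.log (σ^2*(1+b^2*(r' i)^2) + μ' i*(1+|a*b| * (r' i))^2)
        - Real.log (σ^2*(1+b^2*(r' i)^2)))
        = Fobj ⟨μ', fun i => ((sg*r' i : ℝ):ℂ)⟩ := by
      rw [hFobj]
      refine Finset.sum_congr rfl (fun i _ => ?_)
      rw [hTform (μ' i) (r' i) (h1 i) (h2 i)]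
    have hchain2 : Fobj ⟨μ', fun i => ((sg*r' i : ℝ):ℂ)⟩ ≤ Fobj p0 := hp0max hmem
    have hchain3 : Fobj p0 ≤ ∑ i, (Real.log (σ^2*(1+b^2*(r i)^2)
        + μ0 i*(1+|a*b| * (r i))^2) - Real.log (σ^2*(1+b^2*(r i)^2))) := by
      rw [hFobj]
      refine Finset.sum_le_sum (fun i _ => ?_)
      have := hbin (μ0 i) (hp0nn i) (l0 i)
      rw [← hri i] at this
      exact this
    linarith
  -- invoke the core structural result
  obtain ⟨F, hF11, hFmem⟩ := lti_core (σ^2) (a^2) (b^2) (|a*b|) P γ n hs hA hB habs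
    hc2 μ0 r hp0nn hr0 hTmax hfeasμ hfeasr hzero
  -- fiberwise averaging of source powers
  set μstar : Fin n → ℝ := fun i =>
      (∑ j ∈ Finset.univ.filter (fun j => r j = r i), μ0 j)
        / ((Finset.univ.filter (fun j => r j = r i)).card : ℝ) with hμstardef
  set l1 : Fin n → ℂ := fun i => ((sg*r i : ℝ):ℂ) with hl1def
  have hμstar_const : ∀ i j, r i = r j → μstar i = μstar j := by
    intro i j hij
    simp only [hμstardef, hij]
  have hμstar0 : ∀ i, 0 ≤ μstar i := by
    intro i
    exact div_nonneg (Finset.sum_nonneg (fun j _ => hp0nn j)) (Nat.cast_nonneg _)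
  have havg : ∀ (w : Fin n → ℝ), (∀ i j, r i = r j → w i = w j) →
      ∑ i, μstar i * w i = ∑ i, μ0 i * w i := by
    intro w hw
    exact lti_avg_sum r μ0 w hw
  have hsumstar : ∑ i, μstar i = ∑ i, μ0 i := by
    have := havg (fun _ => 1) (fun _ _ _ => rfl)
    simpa using this
  have hrelstar : ∑ i, (a^2*μstar i+σ^2)*(r i)^2 = ∑ i, (a^2*μ0 i+σ^2)*(r i)^2 := by
    have hw := havg (fun i => a^2*(r i)^2) (fun i j hij => by simp only [hij])
    have e1 : ∀ (m : Fin n → ℝ), ∑ i, (a^2*m i+σ^2)*(r i)^2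
        = ∑ i, m i * (a^2*(r i)^2) + ∑ i, σ^2*(r i)^2 := by
      intro m
      rw [← Finset.sum_add_distrib]
      refine Finset.sum_congr rfl (fun i _ => by ring)
    rw [e1, e1, hw]
  -- averaging does not decrease the objective
  have havgobj : ∑ i, (Real.log (σ^2*(1+b^2*(r i)^2) + μ0 i*(1+|a*b| * (r i))^2)
        - Real.log (σ^2*(1+b^2*(r i)^2)))
      ≤ ∑ i, (Real.log (σ^2*(1+b^2*(r i)^2) + μstar i*(1+|a*b| * (r i))^2)
        - Real.log (σ^2*(1+b^2*(r i)^2))) := by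
    have htan : ∀ i, Real.log (σ^2*(1+b^2*(r i)^2) + μ0 i*(1+|a*b| * (r i))^2)
        - Real.log (σ^2*(1+b^2*(r i)^2) + μstar i*(1+|a*b| * (r i))^2)
        ≤ (μ0 i - μstar i)*((1+|a*b| * (r i))^2
            /(σ^2*(1+b^2*(r i)^2) + μstar i*(1+|a*b| * (r i))^2)) := by
      intro i
      have := lti_tangent (σ^2*(1+b^2*(r i)^2)) ((1+|a*b| * (r i))^2)
        (μ0 i) (μstar i) (by positivity) (by positivity) (hp0nn i) (hμstar0 i)
      calc Real.log (σ^2*(1+b^2*(r i)^2) + μ0 i*(1+|a*b| * (r i))^2)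
          - Real.log (σ^2*(1+b^2*(r i)^2) + μstar i*(1+|a*b| * (r i))^2)
          ≤ (μ0 i - μstar i)*(1+|a*b| * (r i))^2
            /(σ^2*(1+b^2*(r i)^2) + μstar i*(1+|a*b| * (r i))^2) := this
        _ = (μ0 i - μstar i)*((1+|a*b| * (r i))^2
            /(σ^2*(1+b^2*(r i)^2) + μstar i*(1+|a*b| * (r i))^2)) := by
            rw [mul_div_assoc]
    have hWconst : ∀ i j, r i = r j →
        (1+|a*b| * (r i))^2/(σ^2*(1+b^2*(r i)^2) + μstar i*(1+|a*b| * (r i))^2)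
        = (1+|a*b| * (r j))^2/(σ^2*(1+b^2*(r j)^2) + μstar j*(1+|a*b| * (r j))^2) := by
      intro i j hij
      rw [hμstar_const i j hij, hij]
    have hsumtan := Finset.sum_le_sum (fun i (_ : i ∈ Finset.univ) => htan i)
    have hzero2 : ∑ i, (μ0 i - μstar i)*((1+|a*b| * (r i))^2
        /(σ^2*(1+b^2*(r i)^2) + μstar i*(1+|a*b| * (r i))^2)) = 0 := by
      have hW := havg (fun i => (1+|a*b| * (r i))^2
        /(σ^2*(1+b^2*(r i)^2) + μstar i*(1+|a*b| * (r i))^2)) hWconst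
      rw [Finset.sum_congr rfl (fun i _ => sub_mul (μ0 i) (μstar i) _),
        Finset.sum_sub_distrib, hW]
      ring
    rw [Finset.sum_sub_distrib, Finset.sum_sub_distrib]
    have h5 : ∑ i, Real.log (σ^2*(1+b^2*(r i)^2) + μ0 i*(1+|a*b| * (r i))^2)
        - ∑ i, Real.log (σ^2*(1+b^2*(r i)^2) + μstar i*(1+|a*b| * (r i))^2) ≤ 0 := by
      rw [← Finset.sum_sub_distrib]
      calc ∑ i, (Real.log (σ^2*(1+b^2*(r i)^2) + μ0 i*(1+|a*b| * (r i))^2)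
            - Real.log (σ^2*(1+b^2*(r i)^2) + μstar i*(1+|a*b| * (r i))^2))
          ≤ ∑ i, (μ0 i - μstar i)*((1+|a*b| * (r i))^2
            /(σ^2*(1+b^2*(r i)^2) + μstar i*(1+|a*b| * (r i))^2)) := hsumtan
        _ = 0 := hzero2
    linarith
  -- output
  refine ⟨μstar, l1, hμstar0, ?_, ?_, ?_, ?_, ?_, ?_⟩
  · rw [hsumstar]; exact hfeasμ
  · have : ∀ i, ‖l1 i‖^2 = (r i)^2 := by
      intro i
      rw [hl1def]
      simp only []
      rw [hnormsg (r i) (hr0 i)]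
    calc ∑ i, (a^2*μstar i+σ^2)*‖l1 i‖^2 = ∑ i, (a^2*μstar i+σ^2)*(r i)^2 := by
          refine Finset.sum_congr rfl (fun i _ => by rw [this i])
      _ = ∑ i, (a^2*μ0 i+σ^2)*(r i)^2 := hrelstar
      _ ≤ (n:ℝ)*γ*P := hfeasr
  · -- optimality
    intro μ' l' h1 h2 h3
    have hstep1 : ∑ i, Real.log (1 + (μ' i / σ^2) * ‖1+((a*b : ℝ):ℂ)*l' i‖^2
        / (1+b^2*‖l' i‖^2))
        ≤ ∑ i, (Real.log (σ^2*(1+b^2*((if μ' i = 0 then 0 else min (|a*b|/b^2) ‖l' i‖))^2)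
            + μ' i*(1+|a*b| * ((if μ' i = 0 then 0 else min (|a*b|/b^2) ‖l' i‖)))^2)
          - Real.log (σ^2*(1+b^2*((if μ' i = 0 then 0 else min (|a*b|/b^2) ‖l' i‖))^2))) :=
      Finset.sum_le_sum (fun i _ => hbin (μ' i) (h1 i) (l' i))
    set r' : Fin n → ℝ := fun i => if μ' i = 0 then 0 else min (|a*b|/b^2) ‖l' i‖
      with hr'def
    have hr'0 : ∀ i, 0 ≤ r' i := by
      intro i
      rw [hr'def]
      simp only []
      split
      · exact le_refl 0
      · exact le_min (by positivity) (norm_nonneg _)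
    have hr'l : ∀ i, r' i ≤ ‖l' i‖ := by
      intro i
      rw [hr'def]
      simp only []
      split
      · exact norm_nonneg _
      · exact min_le_right _ _
    have hfeasr' : ∑ i, (a^2*μ' i+σ^2)*(r' i)^2 ≤ (n:ℝ)*γ*P := by
      refine le_trans (Finset.sum_le_sum (fun i _ => ?_)) h3
      have e1 : (r' i)^2 ≤ ‖l' i‖^2 := pow_le_pow_left₀ (hr'0 i) (hr'l i) 2
      have e2 : 0 ≤ a^2*μ' i+σ^2 := by nlinarith [h1 i]
      nlinarith
    have hstep2 := hTmax μ' r' h1 hr'0 h2 hfeasr'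
    have hstep3 : ∑ i, (Real.log (σ^2*(1+b^2*(r i)^2) + μstar i*(1+|a*b| * (r i))^2)
          - Real.log (σ^2*(1+b^2*(r i)^2)))
        = ∑ i, Real.log (1 + (μstar i / σ^2) * ‖1+((a*b : ℝ):ℂ)*l1 i‖^2
            / (1+b^2*‖l1 i‖^2)) := by
      refine Finset.sum_congr rfl (fun i _ => ?_)
      rw [hl1def]
      simp only []
      rw [hTform (μstar i) (r i) (hμstar0 i) (hr0 i)]
    have hfinal : ∑ i, Real.log (1 + (μ' i / σ^2) * ‖1+((a*b : ℝ):ℂ)*l' i‖^2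
        / (1+b^2*‖l' i‖^2))
        ≤ ∑ i, Real.log (1 + (μstar i / σ^2) * ‖1+((a*b : ℝ):ℂ)*l1 i‖^2
            / (1+b^2*‖l1 i‖^2)) := by
      rw [← hstep3]
      exact le_trans hstep1 (le_trans hstep2 havgobj)
    have hcoef : (0:ℝ) ≤ 1/(2*(n:ℝ)) := by positivity
    exact mul_le_mul_of_nonneg_left hfinal hcoef
  · -- at most 50 distinct gains
    have himg : Finset.image l1 Finset.univ
        = Finset.image (fun y : ℝ => ((sg*y : ℝ):ℂ)) (Finset.image r Finset.univ) := by
      rw [Finset.image_image]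
      rfl
    have hsubr : Finset.image r Finset.univ ⊆ insert 0 (insert (|a*b|/b^2) F) := by
      intro y hy
      obtain ⟨i, -, rfl⟩ := Finset.mem_image.mp hy
      by_cases hy0 : r i = 0
      · rw [hy0]; exact Finset.mem_insert_self _ _
      by_cases hyρ : r i = |a*b|/b^2
      · rw [hyρ]
        exact Finset.mem_insert_of_mem (Finset.mem_insert_self _ _)
      · have hlt : 0 < r i := lt_of_le_of_ne (hr0 i) (Ne.symm hy0)
        have hltρ : r i < |a*b|/b^2 := lt_of_le_of_ne (hrρ i) hyρ
        exact Finset.mem_insert_of_mem (Finset.mem_insert_of_mem (hFmem i hlt hltρ))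
    calc (Finset.image l1 Finset.univ).card
        ≤ (Finset.image r Finset.univ).card := by
          rw [himg]; exact Finset.card_image_le
      _ ≤ (insert 0 (insert (|a*b|/b^2) F)).card := Finset.card_le_card hsubr
      _ ≤ F.card + 2 := by
          calc (insert 0 (insert (|a*b|/b^2) F)).card
              ≤ (insert (|a*b|/b^2) F).card + 1 := Finset.card_insert_le _ _
            _ ≤ F.card + 1 + 1 := by
                have := Finset.card_insert_le (|a*b|/b^2) F
                omega
            _ = F.card + 2 := by omega
      _ ≤ 50 := by omega
  · -- at most 49 nonzero gains
    have hsub : (Finset.image l1 Finset.univ).filter (· ≠ 0)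
        ⊆ Finset.image (fun y : ℝ => ((sg*y : ℝ):ℂ)) (insert (|a*b|/b^2) F) := by
      intro z hz
      obtain ⟨hz1, hz2⟩ := Finset.mem_filter.mp hz
      obtain ⟨i, -, rfl⟩ := Finset.mem_image.mp hz1
      have hrne : r i ≠ 0 := by
        intro h0
        apply hz2
        rw [hl1def]
        simp only []
        rw [h0, mul_zero]
        norm_num
      refine Finset.mem_image.mpr ⟨r i, ?_, rfl⟩
      by_cases hyρ : r i = |a*b|/b^2
      · rw [hyρ]; exact Finset.mem_insert_self _ _
      · have hlt : 0 < r i := lt_of_le_of_ne (hr0 i) (Ne.symm hrne)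
        have hltρ : r i < |a*b|/b^2 := lt_of_le_of_ne (hrρ i) hyρ
        exact Finset.mem_insert_of_mem (hFmem i hlt hltρ)
    calc ((Finset.image l1 Finset.univ).filter (· ≠ 0)).card
        ≤ (Finset.image (fun y : ℝ => ((sg*y : ℝ):ℂ)) (insert (|a*b|/b^2) F)).card :=
          Finset.card_le_card hsub
      _ ≤ (insert (|a*b|/b^2) F).card := Finset.card_image_le
      _ ≤ F.card + 1 := Finset.card_insert_le _ _
      _ ≤ 49 := by omega
  · -- equal gains share equal powers
    intro i j hij
    have : ((sg*r i : ℝ):ℂ) = ((sg*r j : ℝ):ℂ) := hij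
    have h2 : sg*r i = sg*r j := Complex.ofReal_inj.mp this
    have h3 : r i = r j := mul_left_cancel₀ hsgne h2
    exact hμstar_const i j h3
end
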